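/- arXiv:2005.00293 — 7 statements merged into one kernel-verified Lean document; each statement's English description precedes it below -/
import Mathlib

section
/- Power balance for the in-domain actuated vibrating string: Let w : [0,L] × [0,∞) → ℝ be such that the partial derivatives w_t, w_z, w_tt, w_tz exist and are continuous on [0,L] × [0,∞), for every t ≥ 0 the map z ↦ w_z(z,t) is differentiable at every z ∈ (0,L) with z ∉ {L_{p1}, L_{p2}}, and suppose ρ·w_tt(z,t) = T·∂_z w_z(z,t) + g(z)·u(t) holds for all such z and all t ≥ 0, where u : [0,∞) → ℝ is continuous, together with the boundary conditions w(0,t) = 0 and w_z(L,t) = 0 for all t ≥ 0. Then the energy functional H(t) = ∫₀^L ( (ρ/2)·w_t(z,t)² + (T/2)·w_z(z,t)² ) dz is differentiable in t and satisfies H'(t) = u(t)·∫_{L_{p1}}^{L_{p2}} w_t(z,t) dz. -/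
open Real MeasureTheory Set

lemma pbvs_slice_z {F : ℝ → ℝ → ℝ} {L : ℝ}
    (hF : ContinuousOn (fun q : ℝ × ℝ => F q.1 q.2) (Icc 0 L ×ˢ Ici 0))
    {t : ℝ} (ht : t ∈ Ici (0:ℝ)) : ContinuousOn (fun z => F z t) (Icc 0 L) :=
  hF.comp ((continuous_id.prodMk continuous_const).continuousOn)
    (fun _ hz => Set.mk_mem_prod hz ht)

lemma pbvs_slice_t {F : ℝ → ℝ → ℝ} {L : ℝ}
    (hF : ContinuousOn (fun q : ℝ × ℝ => F q.1 q.2) (Icc 0 L ×ˢ Ici 0))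
    {z : ℝ} (hz : z ∈ Icc (0:ℝ) L) : ContinuousOn (fun t => F z t) (Ici 0) :=
  hF.comp ((continuous_const.prodMk continuous_id).continuousOn)
    (fun _ ht => Set.mk_mem_prod hz ht)

/-- Continuity in the time parameter of the space integral. -/
lemma pbvs_cont_param {F : ℝ → ℝ → ℝ} {L : ℝ} (hL : 0 ≤ L)
    (hF : ContinuousOn (fun q : ℝ × ℝ => F q.1 q.2) (Icc 0 L ×ˢ Ici 0)) :
    ContinuousOn (fun r => ∫ z in (0:ℝ)..L, F z r) (Ici 0) := by
  intro x₀ hx₀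
  obtain ⟨M, hM⟩ := (isCompact_Icc.prod isCompact_Icc).exists_bound_of_continuousOn
    (hF.mono (Set.prod_mono_right (Icc_subset_Ici_self (a := x₀ + 1) (b := (0:ℝ)))))
  have hIoc : Set.uIoc (0:ℝ) L = Ioc 0 L := uIoc_of_le hL
  refine intervalIntegral.continuousWithinAt_of_dominated_interval
    (bound := fun _ => M) ?_ ?_ intervalIntegrable_const ?_
  · refine Filter.eventually_of_mem self_mem_nhdsWithin (fun r hr => ?_)
    rw [hIoc]
    exact ((pbvs_slice_z hF hr).mono Ioc_subset_Icc_self).aestronglyMeasurable measurableSet_Ioc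
  · have hmem : (Ici (0:ℝ) ∩ Iic (x₀ + 1)) ∈ nhdsWithin x₀ (Ici 0) :=
      Filter.inter_mem self_mem_nhdsWithin
        (nhdsWithin_le_nhds (Iic_mem_nhds (lt_add_one x₀)))
    refine Filter.eventually_of_mem hmem (fun r hr => Filter.Eventually.of_forall (fun z hz => ?_))
    rw [hIoc] at hz
    exact hM (z, r) ⟨⟨hz.1.le, hz.2⟩, ⟨hr.1, hr.2⟩⟩
  · refine Filter.Eventually.of_forall (fun z hz => ?_)
    rw [hIoc] at hz
    exact pbvs_slice_t hF ⟨hz.1.le, hz.2⟩ x₀ hx₀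

/-- Continuity in the space parameter of the time integral. -/
lemma pbvs_cont_param2 {F : ℝ → ℝ → ℝ} {L s : ℝ} (hs : 0 ≤ s)
    (hF : ContinuousOn (fun q : ℝ × ℝ => F q.1 q.2) (Icc 0 L ×ˢ Ici 0)) :
    ContinuousOn (fun y => ∫ x in (0:ℝ)..s, F y x) (Icc 0 L) := by
  intro y₀ hy₀
  obtain ⟨M, hM⟩ := (isCompact_Icc.prod isCompact_Icc).exists_bound_of_continuousOn
    (hF.mono (Set.prod_mono_right (Icc_subset_Ici_self (a := s) (b := (0:ℝ)))))
  have hIoc : Set.uIoc (0:ℝ) s = Ioc 0 s := uIoc_of_le hs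
  refine intervalIntegral.continuousWithinAt_of_dominated_interval
    (bound := fun _ => M) ?_ ?_ intervalIntegrable_const ?_
  · refine Filter.eventually_of_mem self_mem_nhdsWithin (fun y hy => ?_)
    rw [hIoc]
    exact ((pbvs_slice_t hF hy).mono (fun x hx => hx.1.le)).aestronglyMeasurable
      measurableSet_Ioc
  · refine Filter.eventually_of_mem self_mem_nhdsWithin
      (fun y hy => Filter.Eventually.of_forall (fun x hx => ?_))
    rw [hIoc] at hx
    exact hM (y, x) ⟨hy, ⟨hx.1.le, hx.2⟩⟩
  · refine Filter.Eventually.of_forall (fun x hx => ?_)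
    rw [hIoc] at hx
    exact pbvs_slice_z hF hx.1.le y₀ hy₀

/-- Fubini for continuous integrands on a rectangle. -/
lemma pbvs_swap {F : ℝ → ℝ → ℝ} {L s : ℝ} (hL : 0 ≤ L) (hs : 0 ≤ s)
    (hF : ContinuousOn (fun q : ℝ × ℝ => F q.1 q.2) (Icc 0 L ×ˢ Ici 0)) :
    (∫ z in (0:ℝ)..L, ∫ x in (0:ℝ)..s, F z x) = ∫ x in (0:ℝ)..s, ∫ z in (0:ℝ)..L, F z x := by
  have hC : ContinuousOn (fun q : ℝ × ℝ => F q.1 q.2) (Icc 0 L ×ˢ Icc 0 s) :=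
    hF.mono (Set.prod_mono_right Icc_subset_Ici_self)
  have hint : IntegrableOn (fun q : ℝ × ℝ => F q.1 q.2) (Ioc 0 L ×ˢ Ioc 0 s) :=
    (hC.integrableOn_compact (isCompact_Icc.prod isCompact_Icc)).mono_set
      (Set.prod_mono Ioc_subset_Icc_self Ioc_subset_Icc_self)
  rw [intervalIntegral.integral_of_le hL, intervalIntegral.integral_of_le hs]
  simp_rw [intervalIntegral.integral_of_le hs, intervalIntegral.integral_of_le hL]
  refine MeasureTheory.integral_integral_swap ?_
  rw [Measure.prod_restrict]
  exact hint

/-- One-sided derivative of a primitive within `Ici 0`. -/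
lemma pbvs_primitive {f : ℝ → ℝ} (hf : ContinuousOn f (Ici 0)) {t : ℝ} (ht : 0 ≤ t) :
    HasDerivWithinAt (fun s => ∫ x in (0:ℝ)..s, f x) (f t) (Ici 0) t := by
  have hii : IntervalIntegrable f volume 0 t := by
    apply ContinuousOn.intervalIntegrable
    rw [uIcc_of_le ht]
    exact hf.mono Icc_subset_Ici_self
  rcases eq_or_lt_of_le ht with h0 | h0
  · rw [← h0] at hii ⊢
    exact intervalIntegral.integral_hasDerivWithinAt_right hii
      ⟨Ioc 0 1, Ioc_mem_nhdsGT_of_mem ⟨le_rfl, zero_lt_one⟩,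
        (hf.mono (fun y hy => hy.1.le)).aestronglyMeasurable measurableSet_Ioc⟩
      ((hf 0 Set.self_mem_Ici).mono Ioi_subset_Ici_self)
  · exact (intervalIntegral.integral_hasDerivAt_right hii
      ⟨Ici 0, Ici_mem_nhds h0, hf.aestronglyMeasurable measurableSet_Ici⟩
      ((hf t ht).continuousAt (Ici_mem_nhds h0))).hasDerivWithinAt

/-- A continuous function on `[0, L]` with identically vanishing primitive is zero. -/
lemma pbvs_zero {f : ℝ → ℝ} {L : ℝ} (hL : 0 < L) (hf : ContinuousOn f (Icc 0 L))
    (h0 : ∀ z ∈ Icc (0:ℝ) L, (∫ y in (0:ℝ)..z, f y) = 0) :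
    ∀ z ∈ Icc (0:ℝ) L, f z = 0 := by
  intro z hz
  rcases eq_or_lt_of_le hz.1 with hz0 | hz0
  · -- z = 0 : use the right derivative within Icc 0 L
    have hii : IntervalIntegrable f volume 0 0 := IntervalIntegrable.refl
    have hd : HasDerivWithinAt (fun x => ∫ y in (0:ℝ)..x, f y) (f 0) (Ici 0) 0 :=
      intervalIntegral.integral_hasDerivWithinAt_right hii
        ⟨Ioc 0 L, Ioc_mem_nhdsGT_of_mem ⟨le_rfl, hL⟩,
          (hf.mono Ioc_subset_Icc_self).aestronglyMeasurable measurableSet_Ioc⟩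
        (((continuousWithinAt_Icc_iff_Ici hL).1 (hf 0 ⟨le_rfl, hL.le⟩)).mono
          Ioi_subset_Ici_self)
    have hd' : HasDerivWithinAt (fun x => ∫ y in (0:ℝ)..x, f y) (f 0) (Icc 0 L) 0 :=
      hd.mono Icc_subset_Ici_self
    have hc : HasDerivWithinAt (fun x => ∫ y in (0:ℝ)..x, f y) 0 (Icc 0 L) 0 :=
      (hasDerivWithinAt_const 0 (Icc 0 L) (0:ℝ)).congr (fun x hx => h0 x hx)
        (h0 0 ⟨le_rfl, hL.le⟩)
    have hu : UniqueDiffWithinAt ℝ (Icc (0:ℝ) L) 0 := uniqueDiffOn_Icc hL 0 ⟨le_rfl, hL.le⟩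
    rw [← hz0]
    calc f 0 = derivWithin (fun x => ∫ y in (0:ℝ)..x, f y) (Icc 0 L) 0 :=
          (hd'.derivWithin hu).symm
      _ = 0 := hc.derivWithin hu
  · -- 0 < z : use the left derivative within Icc 0 z
    have hsub : Icc (0:ℝ) z ⊆ Icc 0 L := Icc_subset_Icc le_rfl hz.2
    have hii : IntervalIntegrable f volume 0 z := by
      apply ContinuousOn.intervalIntegrable
      rw [uIcc_of_le hz.1]
      exact hf.mono hsub
    have hd : HasDerivWithinAt (fun x => ∫ y in (0:ℝ)..x, f y) (f z) (Iic z) z :=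
      intervalIntegral.integral_hasDerivWithinAt_right hii
        ⟨Icc 0 z, Icc_mem_nhdsLE hz0,
          (hf.mono hsub).aestronglyMeasurable measurableSet_Icc⟩
        ((continuousWithinAt_Icc_iff_Iic hz0).1 ((hf z hz).mono hsub))
    have hd' : HasDerivWithinAt (fun x => ∫ y in (0:ℝ)..x, f y) (f z) (Icc 0 z) z :=
      hd.mono (fun y hy => hy.2)
    have hc : HasDerivWithinAt (fun x => ∫ y in (0:ℝ)..x, f y) 0 (Icc 0 z) z :=
      (hasDerivWithinAt_const z (Icc 0 z) (0:ℝ)).congr (fun x hx => h0 x (hsub hx))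
        (h0 z hz)
    have hu : UniqueDiffWithinAt ℝ (Icc (0:ℝ) z) z := uniqueDiffOn_Icc hz0 z ⟨hz.1, le_rfl⟩
    calc f z = derivWithin (fun x => ∫ y in (0:ℝ)..x, f y) (Icc 0 z) z :=
          (hd'.derivWithin hu).symm
      _ = 0 := hc.derivWithin hu

/-- Power balance for the in-domain actuated vibrating string:
`H(t) = ∫₀^L ((ρ/2) w_t² + (T/2) w_z²) dz` satisfies
`H'(t) = u(t) · ∫_{Lp1}^{Lp2} w_t dz`. -/
theorem power_balance_vibrating_string
    (L T ρ Lp1 Lp2 : ℝ)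
    (hL : 0 < L) (hT : 0 < T) (hρ : 0 < ρ)
    (hp1 : 0 ≤ Lp1) (hp12 : Lp1 < Lp2) (hp2 : Lp2 ≤ L)
    (g : ℝ → ℝ) (hg : ∀ z, g z = if Lp1 ≤ z ∧ z ≤ Lp2 then 1 else 0)
    (u : ℝ → ℝ) (hu : Continuous u)
    (w wt wz wtt wtz wzz : ℝ → ℝ → ℝ)
    -- existence of the partial derivatives w_t, w_z, w_tt, w_tz on [0,L] × [0,∞)
    (hwt : ∀ z ∈ Icc (0:ℝ) L, ∀ t ∈ Ici (0:ℝ),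
      HasDerivWithinAt (fun s => w z s) (wt z t) (Ici 0) t)
    (hwz : ∀ z ∈ Icc (0:ℝ) L, ∀ t ∈ Ici (0:ℝ),
      HasDerivWithinAt (fun y => w y t) (wz z t) (Icc 0 L) z)
    (hwtt : ∀ z ∈ Icc (0:ℝ) L, ∀ t ∈ Ici (0:ℝ),
      HasDerivWithinAt (fun s => wt z s) (wtt z t) (Ici 0) t)
    (hwtz : ∀ z ∈ Icc (0:ℝ) L, ∀ t ∈ Ici (0:ℝ),
      HasDerivWithinAt (fun y => wt y t) (wtz z t) (Icc 0 L) z)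
    -- continuity of the partial derivatives on [0,L] × [0,∞)
    (hwt_cont : ContinuousOn (fun q : ℝ × ℝ => wt q.1 q.2) (Icc 0 L ×ˢ Ici 0))
    (hwz_cont : ContinuousOn (fun q : ℝ × ℝ => wz q.1 q.2) (Icc 0 L ×ˢ Ici 0))
    (hwtt_cont : ContinuousOn (fun q : ℝ × ℝ => wtt q.1 q.2) (Icc 0 L ×ˢ Ici 0))
    (hwtz_cont : ContinuousOn (fun q : ℝ × ℝ => wtz q.1 q.2) (Icc 0 L ×ˢ Ici 0))
    -- differentiability of z ↦ w_z(z,t) away from the actuator edges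
    (hwzz : ∀ t ∈ Ici (0:ℝ), ∀ z ∈ Ioo (0:ℝ) L, z ≠ Lp1 → z ≠ Lp2 →
      HasDerivAt (fun y => wz y t) (wzz z t) z)
    -- the PDE ρ w_tt = T ∂_z w_z + g(z) u(t)
    (hpde : ∀ t ∈ Ici (0:ℝ), ∀ z ∈ Ioo (0:ℝ) L, z ≠ Lp1 → z ≠ Lp2 →
      ρ * wtt z t = T * wzz z t + g z * u t)
    -- boundary conditions
    (hbc0 : ∀ t ∈ Ici (0:ℝ), w 0 t = 0)
    (hbcL : ∀ t ∈ Ici (0:ℝ), wz L t = 0) :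
    ∀ t ∈ Ici (0:ℝ),
      HasDerivWithinAt
        (fun s => ∫ z in (0:ℝ)..L, ((ρ/2) * (wt z s)^2 + (T/2) * (wz z s)^2))
        (u t * ∫ z in Lp1..Lp2, wt z t) (Ici 0) t := by
  have hL0 : (0:ℝ) ≤ L := hL.le
  have h0L : (0:ℝ) ∈ Icc (0:ℝ) L := ⟨le_rfl, hL0⟩
  have hLL : L ∈ Icc (0:ℝ) L := ⟨hL0, le_rfl⟩
  -- continuity of the integrands
  have hG_cont : ContinuousOn
      (fun q : ℝ × ℝ => (ρ/2) * (wt q.1 q.2)^2 + (T/2) * (wz q.1 q.2)^2)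
      (Icc 0 L ×ˢ Ici 0) :=
    (continuousOn_const.mul (hwt_cont.pow 2)).add (continuousOn_const.mul (hwz_cont.pow 2))
  have hGt_cont : ContinuousOn
      (fun q : ℝ × ℝ => ρ * (wt q.1 q.2 * wtt q.1 q.2) + T * (wz q.1 q.2 * wtz q.1 q.2))
      (Icc 0 L ×ˢ Ici 0) :=
    (continuousOn_const.mul (hwt_cont.mul hwtt_cont)).add
      (continuousOn_const.mul (hwz_cont.mul hwtz_cont))
  -- w_t(0, s) = 0 for s ≥ 0
  have hwt0 : ∀ s ∈ Ici (0:ℝ), wt 0 s = 0 := by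
    intro s hs
    have h1 := hwt 0 h0L s hs
    have h2 : HasDerivWithinAt (fun r => w 0 r) 0 (Ici 0) s :=
      (hasDerivWithinAt_const s (Ici 0) (0:ℝ)).congr (fun r hr => hbc0 r hr) (hbc0 s hs)
    have hu0 : UniqueDiffWithinAt ℝ (Ici (0:ℝ)) s := uniqueDiffOn_Ici 0 s hs
    calc wt 0 s = derivWithin (fun r => w 0 r) (Ici 0) s := (h1.derivWithin hu0).symm
      _ = 0 := h2.derivWithin hu0
  -- FTC in time for w
  have hwFTCt : ∀ z ∈ Icc (0:ℝ) L, ∀ s ∈ Ici (0:ℝ),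
      (∫ x in (0:ℝ)..s, wt z x) = w z s - w z 0 := by
    intro z hz s hs
    apply intervalIntegral.integral_eq_sub_of_hasDeriv_right_of_le hs
    · exact fun x hx => ((hwt z hz x hx.1).continuousWithinAt).mono Icc_subset_Ici_self
    · intro x hx
      exact (hwt z hz x hx.1.le).mono (fun y hy => (hx.1.trans hy).le)
    · rw [intervalIntegrable_iff_integrableOn_Icc_of_le hs]
      exact ((pbvs_slice_t (F := wt) hwt_cont hz).mono Icc_subset_Ici_self).integrableOn_Icc
  -- FTC in space for w
  have hwFTCz : ∀ s ∈ Ici (0:ℝ), ∀ z ∈ Icc (0:ℝ) L,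
      (∫ y in (0:ℝ)..z, wz y s) = w z s - w 0 s := by
    intro s hs z hz
    apply intervalIntegral.integral_eq_sub_of_hasDeriv_right_of_le hz.1
    · exact fun y hy =>
        ((hwz y ⟨hy.1, hy.2.trans hz.2⟩ s hs).continuousWithinAt).mono
          (Icc_subset_Icc le_rfl hz.2)
    · intro y hy
      exact ((hwz y ⟨hy.1.le, hy.2.le.trans hz.2⟩ s hs).hasDerivAt
        (Icc_mem_nhds hy.1 (lt_of_lt_of_le hy.2 hz.2))).hasDerivWithinAt
    · rw [intervalIntegrable_iff_integrableOn_Icc_of_le hz.1]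
      exact ((pbvs_slice_z (F := wz) hwz_cont hs).mono
        (Icc_subset_Icc le_rfl hz.2)).integrableOn_Icc
  -- FTC in space for wt
  have hwtFTCz : ∀ s ∈ Ici (0:ℝ), ∀ z ∈ Icc (0:ℝ) L,
      (∫ y in (0:ℝ)..z, wtz y s) = wt z s - wt 0 s := by
    intro s hs z hz
    apply intervalIntegral.integral_eq_sub_of_hasDeriv_right_of_le hz.1
    · exact (pbvs_slice_z (F := wt) hwt_cont hs).mono (Icc_subset_Icc le_rfl hz.2)
    · intro y hy
      exact ((hwtz y ⟨hy.1.le, hy.2.le.trans hz.2⟩ s hs).hasDerivAt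
        (Icc_mem_nhds hy.1 (lt_of_lt_of_le hy.2 hz.2))).hasDerivWithinAt
    · rw [intervalIntegrable_iff_integrableOn_Icc_of_le hz.1]
      exact ((pbvs_slice_z (F := wtz) hwtz_cont hs).mono
        (Icc_subset_Icc le_rfl hz.2)).integrableOn_Icc
  -- Schwarz-type representation: wz y s = wz y 0 + ∫₀ˢ wtz y x dx
  have hwz_rep : ∀ s ∈ Ici (0:ℝ), ∀ y ∈ Icc (0:ℝ) L,
      wz y s = wz y 0 + ∫ x in (0:ℝ)..s, wtz y x := by
    intro s hs
    have hkey : ∀ z ∈ Icc (0:ℝ) L,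
        (∫ y in (0:ℝ)..z, (wz y s - wz y 0 - ∫ x in (0:ℝ)..s, wtz y x)) = 0 := by
      intro z hz
      have hsub : Icc (0:ℝ) z ⊆ Icc 0 L := Icc_subset_Icc le_rfl hz.2
      have h1 : IntervalIntegrable (fun y => wz y s) volume 0 z := by
        rw [intervalIntegrable_iff_integrableOn_Icc_of_le hz.1]
        exact ((pbvs_slice_z (F := wz) hwz_cont hs).mono hsub).integrableOn_Icc
      have h2 : IntervalIntegrable (fun y => wz y 0) volume 0 z := by
        rw [intervalIntegrable_iff_integrableOn_Icc_of_le hz.1]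
        exact ((pbvs_slice_z (F := wz) hwz_cont Set.self_mem_Ici).mono hsub).integrableOn_Icc
      have h3 : IntervalIntegrable (fun y => ∫ x in (0:ℝ)..s, wtz y x) volume 0 z := by
        rw [intervalIntegrable_iff_integrableOn_Icc_of_le hz.1]
        exact ((pbvs_cont_param2 (F := wtz) hs hwtz_cont).mono hsub).integrableOn_Icc
      have hswap : (∫ y in (0:ℝ)..z, ∫ x in (0:ℝ)..s, wtz y x)
          = ∫ x in (0:ℝ)..s, ∫ y in (0:ℝ)..z, wtz y x :=
        pbvs_swap hz.1 hs (hwtz_cont.mono (Set.prod_mono_left hsub))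
      have hinner : (∫ x in (0:ℝ)..s, ∫ y in (0:ℝ)..z, wtz y x)
          = ∫ x in (0:ℝ)..s, (wt z x - wt 0 x) := by
        refine intervalIntegral.integral_congr (fun x hx => ?_)
        rw [uIcc_of_le hs] at hx
        exact hwtFTCz x hx.1 z hz
      have h4 : IntervalIntegrable (fun x => wt z x) volume 0 s := by
        rw [intervalIntegrable_iff_integrableOn_Icc_of_le hs]
        exact ((pbvs_slice_t (F := wt) hwt_cont hz).mono Icc_subset_Ici_self).integrableOn_Icc
      have h5 : IntervalIntegrable (fun x => wt 0 x) volume 0 s := by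
        rw [intervalIntegrable_iff_integrableOn_Icc_of_le hs]
        exact ((pbvs_slice_t (F := wt) hwt_cont h0L).mono Icc_subset_Ici_self).integrableOn_Icc
      rw [intervalIntegral.integral_sub (h1.sub h2) h3,
        intervalIntegral.integral_sub h1 h2, hswap, hinner,
        intervalIntegral.integral_sub h4 h5,
        hwFTCz s hs z hz, hwFTCz 0 Set.self_mem_Ici z hz,
        hwFTCt z hz s hs, hwFTCt 0 h0L s hs]
      ring
    have hf : ContinuousOn (fun y => wz y s - wz y 0 - ∫ x in (0:ℝ)..s, wtz y x)
        (Icc 0 L) :=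
      ((pbvs_slice_z (F := wz) hwz_cont hs).sub
        (pbvs_slice_z (F := wz) hwz_cont Set.self_mem_Ici)).sub
        (pbvs_cont_param2 (F := wtz) hs hwtz_cont)
    intro y hy
    have := pbvs_zero hL hf hkey y hy
    linarith [this]
  -- time derivative of wz is wtz
  have hwz_t : ∀ y ∈ Icc (0:ℝ) L, ∀ s ∈ Ici (0:ℝ),
      HasDerivWithinAt (fun x => wz y x) (wtz y s) (Ici 0) s := by
    intro y hy s hs
    have hc : ContinuousOn (fun x => wtz y x) (Ici 0) := pbvs_slice_t (F := wtz) hwtz_cont hy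
    exact ((pbvs_primitive hc hs).const_add (wz y 0)).congr
      (fun x hx => hwz_rep x hx y hy) (hwz_rep s hs y hy)
  -- time derivative of the energy density
  have hGt_deriv : ∀ z ∈ Icc (0:ℝ) L, ∀ s ∈ Ici (0:ℝ),
      HasDerivWithinAt (fun r => (ρ/2) * (wt z r)^2 + (T/2) * (wz z r)^2)
        (ρ * (wt z s * wtt z s) + T * (wz z s * wtz z s)) (Ici 0) s := by
    intro z hz s hs
    have h1 := (((hwtt z hz s hs).pow 2).const_mul (ρ/2)).add
      (((hwz_t z hz s hs).pow 2).const_mul (T/2))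
    refine h1.congr_deriv ?_
    push_cast
    ring
  -- continuity of the candidate derivative
  have hD_cont : ContinuousOn
      (fun r => ∫ z in (0:ℝ)..L, (ρ * (wt z r * wtt z r) + T * (wz z r * wtz z r)))
      (Ici 0) := pbvs_cont_param hL0 hGt_cont
  -- the power balance identity at each time r
  have hDval : ∀ r ∈ Ici (0:ℝ),
      (∫ z in (0:ℝ)..L, (ρ * (wt z r * wtt z r) + T * (wz z r * wtz z r))) =
        u r * ∫ z in Lp1..Lp2, wt z r := by
    intro r hr
    have hwt_r : ContinuousOn (fun z => wt z r) (Icc 0 L) :=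
      pbvs_slice_z (F := wt) hwt_cont hr
    have hwz_r : ContinuousOn (fun z => wz z r) (Icc 0 L) :=
      pbvs_slice_z (F := wz) hwz_cont hr
    have hGt_r : ContinuousOn
        (fun z => ρ * (wt z r * wtt z r) + T * (wz z r * wtz z r)) (Icc 0 L) :=
      pbvs_slice_z (F := fun z x => ρ * (wt z x * wtt z x) + T * (wz z x * wtz z x))
        hGt_cont hr
    -- the indicator description of g
    have hgw : ∀ z, g z * wt z r = (Icc Lp1 Lp2).indicator (fun y => wt y r) z := by
      intro z
      rw [hg z]
      by_cases h : Lp1 ≤ z ∧ z ≤ Lp2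
      · rw [if_pos h, indicator_of_mem (mem_Icc.2 h), one_mul]
      · rw [if_neg h, indicator_of_notMem (by simpa [mem_Icc] using h), zero_mul]
    -- integrability facts
    have hind_int : IntegrableOn (fun z => g z * wt z r) (Icc 0 L) := by
      have h1 : IntegrableOn (fun z => wt z r) (Icc 0 L) := hwt_r.integrableOn_Icc
      have h2 := h1.indicator (measurableSet_Icc (a := Lp1) (b := Lp2))
      have : (fun z => g z * wt z r) = (Icc Lp1 Lp2).indicator (fun y => wt y r) :=
        funext hgw
      rw [this]
      exact h2
    have hGt_ii : IntervalIntegrable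
        (fun z => ρ * (wt z r * wtt z r) + T * (wz z r * wtz z r)) volume 0 L := by
      rw [intervalIntegrable_iff_integrableOn_Icc_of_le hL0]
      exact hGt_r.integrableOn_Icc
    have hind_ii : IntervalIntegrable (fun z => u r * (g z * wt z r)) volume 0 L := by
      rw [intervalIntegrable_iff_integrableOn_Icc_of_le hL0]
      exact hind_int.const_mul (u r)
    -- integration by parts via the PDE
    have hψ : ∀ z ∈ Ioo (0:ℝ) L \ ({Lp1, Lp2} : Set ℝ),
        HasDerivAt (fun y => T * (wt y r * wz y r))
          ((ρ * (wt z r * wtt z r) + T * (wz z r * wtz z r)) - u r * (g z * wt z r)) z := by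
      intro z hz
      obtain ⟨hz1, hz2⟩ := hz
      have hne1 : z ≠ Lp1 := fun h => hz2 (by simp [h])
      have hne2 : z ≠ Lp2 := fun h => hz2 (by simp [h])
      have hzIcc : z ∈ Icc (0:ℝ) L := ⟨hz1.1.le, hz1.2.le⟩
      have h1 : HasDerivAt (fun y => wt y r) (wtz z r) z :=
        (hwtz z hzIcc r hr).hasDerivAt (Icc_mem_nhds hz1.1 hz1.2)
      have h2 := hwzz r hr z hz1 hne1 hne2
      have h3 := (h1.mul h2).const_mul T
      refine h3.congr_deriv ?_
      have hp := hpde r hr z hz1 hne1 hne2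
      linear_combination (-wt z r) * hp
    have hψc : ContinuousOn (fun y => T * (wt y r * wz y r)) (Icc 0 L) :=
      continuousOn_const.mul (hwt_r.mul hwz_r)
    have hFTC := integral_eq_of_hasDerivAt_off_countable_of_le
      (fun y => T * (wt y r * wz y r))
      (fun z => (ρ * (wt z r * wtt z r) + T * (wz z r * wtz z r)) - u r * (g z * wt z r))
      hL0 ((Set.countable_singleton Lp2).insert Lp1) hψc hψ (hGt_ii.sub hind_ii)
    have hend : T * (wt L r * wz L r) - T * (wt 0 r * wz 0 r) = 0 := by
      rw [hbcL r hr, hwt0 r hr]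
      ring
    have hsplit : (∫ z in (0:ℝ)..L,
        ((ρ * (wt z r * wtt z r) + T * (wz z r * wtz z r)) - u r * (g z * wt z r)))
        = (∫ z in (0:ℝ)..L, (ρ * (wt z r * wtt z r) + T * (wz z r * wtz z r)))
          - ∫ z in (0:ℝ)..L, u r * (g z * wt z r) :=
      intervalIntegral.integral_sub hGt_ii hind_ii
    -- evaluate the actuator term
    have hact : (∫ z in (0:ℝ)..L, u r * (g z * wt z r))
        = u r * ∫ z in Lp1..Lp2, wt z r := by
      rw [intervalIntegral.integral_const_mul]
      congr 1
      rw [intervalIntegral.integral_of_le hL0, intervalIntegral.integral_of_le hp12.le]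
      simp only [hgw]
      rw [MeasureTheory.integral_indicator (measurableSet_Icc (a := Lp1) (b := Lp2)),
        Measure.restrict_restrict (measurableSet_Icc (a := Lp1) (b := Lp2))]
      apply setIntegral_congr_set
      rw [MeasureTheory.ae_eq_set]
      constructor
      · refine measure_mono_null (t := {Lp1}) (fun x hx => ?_) Real.volume_singleton
        obtain ⟨⟨hx1, hx2⟩, hx3⟩ := hx
        have : ¬ (Lp1 < x ∧ x ≤ Lp2) := hx3
        have hxle : x ≤ Lp1 := by
          by_contra hc
          exact this ⟨lt_of_not_ge hc, hx1.2⟩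
        exact Set.mem_singleton_iff.2 (le_antisymm hxle hx1.1)
      · have : Ioc Lp1 Lp2 ⊆ Icc Lp1 Lp2 ∩ Ioc 0 L := fun x hx =>
          ⟨⟨hx.1.le, hx.2⟩, ⟨lt_of_le_of_lt hp1 hx.1, hx.2.trans hp2⟩⟩
        rw [Set.diff_eq_empty.2 this]
        exact measure_empty
    have h0 : (∫ z in (0:ℝ)..L,
        ((ρ * (wt z r * wtt z r) + T * (wz z r * wtz z r)) - u r * (g z * wt z r))) = 0 := by
      rw [hFTC, hend]
    rw [hsplit] at h0
    rw [← hact]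
    linarith [h0]
  -- per-z fundamental theorem of calculus in time
  have hGint : ∀ s ∈ Ici (0:ℝ), ∀ z ∈ Icc (0:ℝ) L,
      (∫ x in (0:ℝ)..s, (ρ * (wt z x * wtt z x) + T * (wz z x * wtz z x))) =
        ((ρ/2) * (wt z s)^2 + (T/2) * (wz z s)^2) -
          ((ρ/2) * (wt z 0)^2 + (T/2) * (wz z 0)^2) := by
    intro s hs z hz
    apply intervalIntegral.integral_eq_sub_of_hasDeriv_right_of_le hs
    · exact (pbvs_slice_t
        (F := fun z x => (ρ/2) * (wt z x)^2 + (T/2) * (wz z x)^2) hG_cont hz).mono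
        Icc_subset_Ici_self
    · intro x hx
      exact (hGt_deriv z hz x hx.1.le).mono (fun y hy => (hx.1.trans hy).le)
    · rw [intervalIntegrable_iff_integrableOn_Icc_of_le hs]
      exact ((pbvs_slice_t
        (F := fun z x => ρ * (wt z x * wtt z x) + T * (wz z x * wtz z x))
        hGt_cont hz).mono Icc_subset_Ici_self).integrableOn_Icc
  -- the integrated identity H(s) = H(0) + ∫₀ˢ D
  have hHid : ∀ s ∈ Ici (0:ℝ),
      (∫ z in (0:ℝ)..L, ((ρ/2) * (wt z s)^2 + (T/2) * (wz z s)^2)) =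
        (∫ z in (0:ℝ)..L, ((ρ/2) * (wt z 0)^2 + (T/2) * (wz z 0)^2)) +
          ∫ x in (0:ℝ)..s,
            (∫ z in (0:ℝ)..L, (ρ * (wt z x * wtt z x) + T * (wz z x * wtz z x))) := by
    intro s hs
    have hGs_ii : IntervalIntegrable
        (fun z => (ρ/2) * (wt z s)^2 + (T/2) * (wz z s)^2) volume 0 L := by
      rw [intervalIntegrable_iff_integrableOn_Icc_of_le hL0]
      exact (pbvs_slice_z
        (F := fun z x => (ρ/2) * (wt z x)^2 + (T/2) * (wz z x)^2)
        hG_cont hs).integrableOn_Icc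
    have hG0_ii : IntervalIntegrable
        (fun z => (ρ/2) * (wt z 0)^2 + (T/2) * (wz z 0)^2) volume 0 L := by
      rw [intervalIntegrable_iff_integrableOn_Icc_of_le hL0]
      exact (pbvs_slice_z
        (F := fun z x => (ρ/2) * (wt z x)^2 + (T/2) * (wz z x)^2)
        hG_cont Set.self_mem_Ici).integrableOn_Icc
    have h1 : (∫ z in (0:ℝ)..L,
        (((ρ/2) * (wt z s)^2 + (T/2) * (wz z s)^2) -
          ((ρ/2) * (wt z 0)^2 + (T/2) * (wz z 0)^2)))
        = (∫ z in (0:ℝ)..L, ((ρ/2) * (wt z s)^2 + (T/2) * (wz z s)^2))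
          - ∫ z in (0:ℝ)..L, ((ρ/2) * (wt z 0)^2 + (T/2) * (wz z 0)^2) :=
      intervalIntegral.integral_sub hGs_ii hG0_ii
    have h2 : (∫ z in (0:ℝ)..L,
        (((ρ/2) * (wt z s)^2 + (T/2) * (wz z s)^2) -
          ((ρ/2) * (wt z 0)^2 + (T/2) * (wz z 0)^2)))
        = ∫ z in (0:ℝ)..L,
            (∫ x in (0:ℝ)..s, (ρ * (wt z x * wtt z x) + T * (wz z x * wtz z x))) := by
      refine intervalIntegral.integral_congr (fun z hz => ?_)
      rw [uIcc_of_le hL0] at hz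
      exact (hGint s hs z hz).symm
    have h3 := pbvs_swap
      (F := fun z x => ρ * (wt z x * wtt z x) + T * (wz z x * wtz z x)) hL0 hs hGt_cont
    linarith [h1, h2, h3]
  -- conclusion
  intro t ht
  have hprim : HasDerivWithinAt
      (fun s => ∫ x in (0:ℝ)..s,
        (∫ z in (0:ℝ)..L, (ρ * (wt z x * wtt z x) + T * (wz z x * wtz z x))))
      (∫ z in (0:ℝ)..L, (ρ * (wt z t * wtt z t) + T * (wz z t * wtz z t))) (Ici 0) t :=
    pbvs_primitive hD_cont ht
  have hH : HasDerivWithinAt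
      (fun s => ∫ z in (0:ℝ)..L, ((ρ/2) * (wt z s)^2 + (T/2) * (wz z s)^2))
      (∫ z in (0:ℝ)..L, (ρ * (wt z t * wtt z t) + T * (wz z t * wtz z t))) (Ici 0) t :=
    (hprim.const_add _).congr (fun s hs => hHid s hs) (hHid t ht)
  rwa [hDval t ht] at hH
end

section
/- Energy decay of the observer error: Let w̃ : [0,L] × [0,∞) → ℝ be such that the partial derivatives w̃_t, w̃_z, w̃_tt, w̃_tz exist and are continuous on [0,L] × [0,∞), for every t ≥ 0 the map z ↦ w̃_z(z,t) is differentiable at every z ∈ (0,L) with z ∉ {L_{p1}, L_{p2}}, and suppose that ρ·w̃_tt(z,t) = T·∂_z w̃_z(z,t) − k·g(z)·∫_{L_{p1}}^{L_{p2}} w̃_t(y,t) dy holds for all such z and all t ≥ 0, together with the boundary conditions w̃(0,t) = 0 and w̃_z(L,t) = 0 for all t ≥ 0. Then the error energy H̃(t) = ∫₀^L ( (ρ/2)·w̃_t(z,t)² + (T/2)·w̃_z(z,t)² ) dz is differentiable in t and satisfies H̃'(t) = −k·( ∫_{L_{p1}}^{L_{p2}} w̃_t(y,t) dy )² ≤ 0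 for all t ≥ 0. -/
open Real MeasureTheory Set
open scoped Topology

/-- Energy decay of the observer error:
`H̃(t) = ∫₀^L ((ρ/2) w̃_t² + (T/2) w̃_z²) dz` satisfies
`H̃'(t) = −k (∫_{Lp1}^{Lp2} w̃_t dy)² ≤ 0`. -/
theorem observer_error_energy_decay
    (L T ρ k Lp1 Lp2 : ℝ)
    (hL : 0 < L) (hT : 0 < T) (hρ : 0 < ρ) (hk : 0 < k)
    (hp1 : 0 ≤ Lp1) (hp12 : Lp1 < Lp2) (hp2 : Lp2 ≤ L)
    (g : ℝ → ℝ) (hg : ∀ z, g z = if Lp1 ≤ z ∧ z ≤ Lp2 then 1 else 0)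
    (w wt wz wtt wtz wzz : ℝ → ℝ → ℝ)
    -- existence of the partial derivatives w̃_t, w̃_z, w̃_tt, w̃_tz on [0,L] × [0,∞)
    (hwt : ∀ z ∈ Icc (0:ℝ) L, ∀ t ∈ Ici (0:ℝ),
      HasDerivWithinAt (fun s => w z s) (wt z t) (Ici 0) t)
    (hwz : ∀ z ∈ Icc (0:ℝ) L, ∀ t ∈ Ici (0:ℝ),
      HasDerivWithinAt (fun y => w y t) (wz z t) (Icc 0 L) z)
    (hwtt : ∀ z ∈ Icc (0:ℝ) L, ∀ t ∈ Ici (0:ℝ),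
      HasDerivWithinAt (fun s => wt z s) (wtt z t) (Ici 0) t)
    (hwtz : ∀ z ∈ Icc (0:ℝ) L, ∀ t ∈ Ici (0:ℝ),
      HasDerivWithinAt (fun y => wt y t) (wtz z t) (Icc 0 L) z)
    -- continuity of the partial derivatives on [0,L] × [0,∞)
    (hwt_cont : ContinuousOn (fun q : ℝ × ℝ => wt q.1 q.2) (Icc 0 L ×ˢ Ici 0))
    (hwz_cont : ContinuousOn (fun q : ℝ × ℝ => wz q.1 q.2) (Icc 0 L ×ˢ Ici 0))
    (hwtt_cont : ContinuousOn (fun q : ℝ × ℝ => wtt q.1 q.2) (Icc 0 L ×ˢ Ici 0))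
    (hwtz_cont : ContinuousOn (fun q : ℝ × ℝ => wtz q.1 q.2) (Icc 0 L ×ˢ Ici 0))
    -- differentiability of z ↦ w̃_z(z,t) away from the actuator edges
    (hwzz : ∀ t ∈ Ici (0:ℝ), ∀ z ∈ Ioo (0:ℝ) L, z ≠ Lp1 → z ≠ Lp2 →
      HasDerivAt (fun y => wz y t) (wzz z t) z)
    -- observer-error dynamics ρ w̃_tt = T ∂_z w̃_z − k g(z) ∫_{Lp1}^{Lp2} w̃_t dy
    (hpde : ∀ t ∈ Ici (0:ℝ), ∀ z ∈ Ioo (0:ℝ) L, z ≠ Lp1 → z ≠ Lp2 →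
      ρ * wtt z t = T * wzz z t - k * g z * ∫ y in Lp1..Lp2, wt y t)
    -- boundary conditions
    (hbc0 : ∀ t ∈ Ici (0:ℝ), w 0 t = 0)
    (hbcL : ∀ t ∈ Ici (0:ℝ), wz L t = 0) :
    ∀ t ∈ Ici (0:ℝ),
      HasDerivWithinAt
        (fun s => ∫ z in (0:ℝ)..L, ((ρ/2) * (wt z s)^2 + (T/2) * (wz z s)^2))
        (-k * (∫ y in Lp1..Lp2, wt y t)^2) (Ici 0) t
      ∧ -k * (∫ y in Lp1..Lp2, wt y t)^2 ≤ 0 := by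
  -- clamping maps
  set pr : ℝ → ℝ := fun z => max 0 (min z L) with hpr
  have prcont : Continuous pr := (continuous_const.max (continuous_id.min continuous_const))
  have prmem : ∀ z, pr z ∈ Icc (0:ℝ) L := fun z => ⟨le_max_left _ _, max_le hL.le (min_le_right _ _)⟩
  have preq : ∀ z ∈ Icc (0:ℝ) L, pr z = z := by
    intro z hz; simp only [hpr]; rw [min_eq_left hz.2, max_eq_right hz.1]
  set sg : ℝ → ℝ := fun u => max u 0 with hsg
  have sgcont : Continuous sg := continuous_id.max continuous_const
  have sgmem : ∀ u, sg u ∈ Ici (0:ℝ) := fun u => Set.mem_Ici.2 (le_max_right _ _)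
  have sgeq : ∀ u ∈ Ici (0:ℝ), sg u = u := fun u hu => max_eq_left hu
  -- directional continuity helpers
  have hcomp : ∀ {f : ℝ → ℝ → ℝ}, ContinuousOn (fun q : ℝ × ℝ => f q.1 q.2) (Icc 0 L ×ˢ Ici 0) →
      Continuous (fun p : ℝ × ℝ => f (pr p.1) (sg p.2)) := by
    intro f hf
    exact hf.comp_continuous ((prcont.comp continuous_fst).prodMk (sgcont.comp continuous_snd))
      (fun p => ⟨prmem _, sgmem _⟩)
  have wt_t : ∀ x ∈ Icc (0:ℝ) L, ContinuousOn (fun u => wt x u) (Ici 0) := by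
    intro x hx
    exact hwt_cont.comp ((continuous_const.prodMk continuous_id).continuousOn)
      (fun u hu => ⟨hx, hu⟩)
  have wtz_t : ∀ x ∈ Icc (0:ℝ) L, ContinuousOn (fun u => wtz x u) (Ici 0) := by
    intro x hx
    exact hwtz_cont.comp ((continuous_const.prodMk continuous_id).continuousOn)
      (fun u hu => ⟨hx, hu⟩)
  have wt_z : ∀ s ∈ Ici (0:ℝ), ContinuousOn (fun x => wt x s) (Icc 0 L) := by
    intro s hs
    exact hwt_cont.comp ((continuous_id.prodMk continuous_const).continuousOn)
      (fun x hx => ⟨hx, hs⟩)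
  have wz_z : ∀ s ∈ Ici (0:ℝ), ContinuousOn (fun x => wz x s) (Icc 0 L) := by
    intro s hs
    exact hwz_cont.comp ((continuous_id.prodMk continuous_const).continuousOn)
      (fun x hx => ⟨hx, hs⟩)
  -- extended integrand
  set d : ℝ → ℝ → ℝ := fun z u =>
    ρ * wt (pr z) (sg u) * wtt (pr z) (sg u) + T * wz (pr z) (sg u) * wtz (pr z) (sg u) with hd
  have dcont : Continuous (fun p : ℝ × ℝ => d p.1 p.2) := by
    exact ((continuous_const.mul (hcomp hwt_cont)).mul (hcomp hwtt_cont)).add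
      ((continuous_const.mul (hcomp hwz_cont)).mul (hcomp hwtz_cont))
  have deq : ∀ z ∈ Icc (0:ℝ) L, ∀ u ∈ Ici (0:ℝ),
      d z u = ρ * wt z u * wtt z u + T * wz z u * wtz z u := by
    intro z hz u hu; simp only [hd, preq z hz, sgeq u hu]
  -- w̃_t(0, t) = 0
  have wt0 : ∀ s ∈ Ici (0:ℝ), wt 0 s = 0 := by
    intro s hs
    have h1 : HasDerivWithinAt (fun u => w 0 u) (wt 0 s) (Ici 0) s :=
      hwt 0 ⟨le_rfl, hL.le⟩ s hs
    have h2 : HasDerivWithinAt (fun u => w 0 u) 0 (Ici 0) s :=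
      (hasDerivWithinAt_const s _ (0:ℝ)).congr (fun y hy => hbc0 y hy) (hbc0 s hs)
    have hud : UniqueDiffWithinAt ℝ (Ici (0:ℝ)) s := uniqueDiffOn_Ici 0 s hs
    rw [← h1.derivWithin hud, h2.derivWithin hud]
  -- mixed partial: t-derivative of wz is wtz  (for interior z)
  have hwzt : ∀ z ∈ Ioo (0:ℝ) L, ∀ u ∈ Ici (0:ℝ),
      HasDerivWithinAt (fun v => wz z v) (wtz z u) (Ici 0) u := by
    intro z hz
    have hzI : z ∈ Icc (0:ℝ) L := ⟨hz.1.le, hz.2.le⟩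
    obtain ⟨ε, εpos, hball⟩ := Metric.isOpen_iff.1 isOpen_Ioo z hz
    have hIccnhds : Icc (0:ℝ) L ∈ 𝓝 z := Icc_mem_nhds hz.1 hz.2
    -- representation of wz z in time
    have repz : ∀ s ∈ Ici (0:ℝ), wz z s - wz z 0 = ∫ u in (0:ℝ)..s, wtz z u := by
      intro s hs
      have ha : ∀ y ∈ Icc (0:ℝ) L, w y s - w y 0 = ∫ u in (0:ℝ)..s, wt y u := by
        intro y hy
        refine (intervalIntegral.integral_eq_sub_of_hasDeriv_right_of_le hs ?_ ?_ ?_).symm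
        · intro u hu
          exact ((hwt y hy u hu.1).continuousWithinAt).mono
            (fun v hv => hv.1)
        · intro u hu
          exact (hwt y hy u hu.1.le).mono (fun v hv => (hu.1.trans hv).le)
        · exact ((wt_t y hy).mono (fun v hv => hv.1)).intervalIntegrable_of_Icc hs
      obtain ⟨C, hC⟩ := (isCompact_Icc.prod (isCompact_Icc (a := (0:ℝ)) (b := s))).exists_bound_of_continuousOn
        (hwtz_cont.mono (Set.prod_mono subset_rfl Icc_subset_Ici_self))
      have hb := intervalIntegral.hasDerivAt_integral_of_dominated_loc_of_deriv_le
        (F := fun x u => wt x u) (F' := fun x u => wtz x u) (x₀ := z) (a := (0:ℝ)) (b := s)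
        (bound := fun _ => C) (μ := volume) (Metric.ball_mem_nhds z εpos) ?_ ?_ ?_ ?_ ?_ ?_
      · have hc : HasDerivAt (fun y => w y s - w y 0) (wz z s - wz z 0) z :=
          ((hwz z hzI s hs).hasDerivAt hIccnhds).sub
            ((hwz z hzI 0 Set.self_mem_Ici).hasDerivAt hIccnhds)
        have heq : (fun y => w y s - w y 0) =ᶠ[𝓝 z] fun y => ∫ u in (0:ℝ)..s, wt y u := by
          filter_upwards [hIccnhds] with y hy using ha y hy
        exact (hc.congr_of_eventuallyEq heq.symm).unique hb.2
      · filter_upwards [hIccnhds] with x hx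
        have hsub : Set.uIoc (0:ℝ) s ⊆ Ici 0 := by rw [uIoc_of_le hs]; exact fun v hv => hv.1.le
        exact ((wt_t x hx).mono hsub).aestronglyMeasurable measurableSet_uIoc
      · exact ((wt_t z hzI).mono (fun v hv => hv.1)).intervalIntegrable_of_Icc hs
      · have hsub : Set.uIoc (0:ℝ) s ⊆ Ici 0 := by rw [uIoc_of_le hs]; exact fun v hv => hv.1.le
        exact ((wtz_t z hzI).mono hsub).aestronglyMeasurable measurableSet_uIoc
      · refine Filter.Eventually.of_forall (fun u hu x hx => ?_)
        rw [uIoc_of_le hs] at hu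
        have hxI : x ∈ Ioo (0:ℝ) L := hball hx
        exact hC (x, u) ⟨⟨hxI.1.le, hxI.2.le⟩, ⟨hu.1.le, hu.2⟩⟩
      · exact intervalIntegrable_const
      · refine Filter.Eventually.of_forall (fun u hu x hx => ?_)
        rw [uIoc_of_le hs] at hu
        have hxI : x ∈ Ioo (0:ℝ) L := hball hx
        exact (hwtz x ⟨hxI.1.le, hxI.2.le⟩ u hu.1.le).hasDerivAt (Icc_mem_nhds hxI.1 hxI.2)
    -- differentiate the representation
    intro u hu
    set M : ℝ → ℝ := fun v => wtz z (sg v) with hM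
    have Mcont : Continuous M :=
      (wtz_t z hzI).comp_continuous sgcont (fun v => sgmem v)
    have hder : HasDerivAt (fun s => wz z 0 + ∫ v in (0:ℝ)..s, M v) (M u) u :=
      ((intervalIntegral.integral_hasStrictDerivAt_right
        (Mcont.intervalIntegrable _ _) ⟨univ, Filter.univ_mem, Mcont.aestronglyMeasurable⟩
        Mcont.continuousAt).hasDerivAt.const_add _)
    have heqM : ∀ v ∈ Ici (0:ℝ), wz z v = wz z 0 + ∫ x in (0:ℝ)..v, M x := by
      intro v hv
      have : (∫ x in (0:ℝ)..v, wtz z x) = ∫ x in (0:ℝ)..v, M x := by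
        refine intervalIntegral.integral_congr (fun x hx => ?_)
        rw [uIcc_of_le hv] at hx
        simp only [hM, sgeq x hx.1]
      have h2 := repz v hv
      rw [this] at h2
      linarith
    have := hder.hasDerivWithinAt.congr (fun v hv => heqM v hv) (heqM u hu)
    simpa only [hM, sgeq u hu] using this
  -- time derivative of the energy density
  have key : ∀ z ∈ Ioo (0:ℝ) L, ∀ u ∈ Ici (0:ℝ),
      HasDerivWithinAt (fun v => (ρ/2) * (wt z v)^2 + (T/2) * (wz z v)^2) (d z u) (Ici 0) u := by
    intro z hz u hu
    have hzI : z ∈ Icc (0:ℝ) L := ⟨hz.1.le, hz.2.le⟩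
    have h1 : HasDerivWithinAt (fun v => wt z v) (wtt z u) (Ici 0) u := hwtt z hzI u hu
    have h2 : HasDerivWithinAt (fun v => wz z v) (wtz z u) (Ici 0) u := hwzt z hz u hu
    have heq : (fun v => (ρ/2) * (wt z v)^2 + (T/2) * (wz z v)^2)
        = fun v => (ρ/2) * (wt z v * wt z v) + (T/2) * (wz z v * wz z v) := by
      funext v; ring
    rw [heq, deq z hzI u hu]
    refine (((h1.fun_mul h1).const_mul (ρ/2)).add ((h2.fun_mul h2).const_mul (T/2))).congr_deriv (Eq.symm ?_)
    ring
  -- pointwise FTC representation in time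
  have rep : ∀ z ∈ Ioo (0:ℝ) L, ∀ s ∈ Ici (0:ℝ),
      ((ρ/2) * (wt z s)^2 + (T/2) * (wz z s)^2) - ((ρ/2) * (wt z 0)^2 + (T/2) * (wz z 0)^2)
        = ∫ u in (0:ℝ)..s, d z u := by
    intro z hz s hs
    have hzI : z ∈ Icc (0:ℝ) L := ⟨hz.1.le, hz.2.le⟩
    refine (intervalIntegral.integral_eq_sub_of_hasDeriv_right_of_le
      (f := fun v => (ρ/2) * (wt z v)^2 + (T/2) * (wz z v)^2)
      (f' := fun u => d z u) hs ?_ ?_ ?_).symm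
    · have c1 : ContinuousOn (fun v => wt z v) (Icc 0 s) :=
        (wt_t z hzI).mono (fun v hv => hv.1)
      have c2 : ContinuousOn (fun v => wz z v) (Icc 0 s) :=
        hwz_cont.comp ((continuous_const.prodMk continuous_id).continuousOn)
          (fun v hv => ⟨hzI, hv.1⟩)
      exact (continuousOn_const.mul (c1.pow 2)).add (continuousOn_const.mul (c2.pow 2))
    · intro u hu'
      exact (key z hz u hu'.1.le).mono (fun v hv => (hu'.1.trans hv).le)
    · exact ((dcont.comp (continuous_const.prodMk continuous_id)).intervalIntegrable _ _)
  -- energy representation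
  have Gid : ∀ s ∈ Ici (0:ℝ),
      (∫ z in (0:ℝ)..L, ((ρ/2) * (wt z s)^2 + (T/2) * (wz z s)^2))
        = (∫ z in (0:ℝ)..L, ((ρ/2) * (wt z 0)^2 + (T/2) * (wz z 0)^2))
          + ∫ u in (0:ℝ)..s, (∫ z in (0:ℝ)..L, d z u) := by
    intro s hs
    have int_s : IntervalIntegrable
        (fun z => (ρ/2) * (wt z s)^2 + (T/2) * (wz z s)^2) volume 0 L := by
      refine ContinuousOn.intervalIntegrable_of_Icc hL.le ?_
      exact (continuousOn_const.mul (((wt_z s hs)).pow 2)).add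
        (continuousOn_const.mul (((wz_z s hs)).pow 2))
    have int_0 : IntervalIntegrable
        (fun z => (ρ/2) * (wt z 0)^2 + (T/2) * (wz z 0)^2) volume 0 L := by
      refine ContinuousOn.intervalIntegrable_of_Icc hL.le ?_
      exact (continuousOn_const.mul (((wt_z 0 Set.self_mem_Ici)).pow 2)).add
        (continuousOn_const.mul (((wz_z 0 Set.self_mem_Ici)).pow 2))
    have e1 : (∫ z in (0:ℝ)..L, ((ρ/2) * (wt z s)^2 + (T/2) * (wz z s)^2))
        - (∫ z in (0:ℝ)..L, ((ρ/2) * (wt z 0)^2 + (T/2) * (wz z 0)^2))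
        = ∫ z in (0:ℝ)..L, (((ρ/2) * (wt z s)^2 + (T/2) * (wz z s)^2)
            - ((ρ/2) * (wt z 0)^2 + (T/2) * (wz z 0)^2)) :=
      (intervalIntegral.integral_sub int_s int_0).symm
    have e2 : (∫ z in (0:ℝ)..L, (((ρ/2) * (wt z s)^2 + (T/2) * (wz z s)^2)
            - ((ρ/2) * (wt z 0)^2 + (T/2) * (wz z 0)^2)))
        = ∫ z in (0:ℝ)..L, ∫ u in (0:ℝ)..s, d z u := by
      refine intervalIntegral.integral_congr_ae ?_
      have hLnull : ∀ᵐ (z : ℝ), z ≠ L := by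
        refine ae_iff.2 ?_
        simpa using Real.volume_singleton (a := L)
      filter_upwards [hLnull] with z hzL hzmem
      rw [uIoc_of_le hL.le] at hzmem
      exact rep z ⟨hzmem.1, lt_of_le_of_ne hzmem.2 hzL⟩ s hs
    have e3 : (∫ z in (0:ℝ)..L, ∫ u in (0:ℝ)..s, d z u)
        = ∫ u in (0:ℝ)..s, ∫ z in (0:ℝ)..L, d z u := by
      rw [intervalIntegral.integral_of_le hL.le, intervalIntegral.integral_of_le hs]
      simp only [intervalIntegral.integral_of_le hL.le, intervalIntegral.integral_of_le hs]
      refine MeasureTheory.integral_integral_swap ?_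
      rw [Measure.prod_restrict]
      have hint : IntegrableOn (fun p : ℝ × ℝ => d p.1 p.2) (Icc 0 L ×ˢ Icc 0 s)
          (volume.prod volume) := by
        refine (dcont.continuousOn).integrableOn_compact (isCompact_Icc.prod isCompact_Icc)
      exact hint.mono_set (Set.prod_mono Ioc_subset_Icc_self Ioc_subset_Icc_self)
    linarith [e1, e2, e3]
  intro t ht
  have hineq : -k * (∫ y in Lp1..Lp2, wt y t)^2 ≤ 0 := by
    nlinarith [sq_nonneg (∫ y in Lp1..Lp2, wt y t), hk.le]
  refine ⟨?_, hineq⟩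
  -- derivative of the energy
  have Dcont : Continuous (fun u => ∫ z in (0:ℝ)..L, d z u) := by
    have := intervalIntegral.continuous_parametric_intervalIntegral_of_continuous'
      (μ := volume) (f := fun u z => d z u) ?_ 0 L
    · exact this
    · exact dcont.comp (continuous_snd.prodMk continuous_fst)
  have hGt : HasDerivWithinAt
      (fun s => ∫ z in (0:ℝ)..L, ((ρ/2) * (wt z s)^2 + (T/2) * (wz z s)^2))
      (∫ z in (0:ℝ)..L, d z t) (Ici 0) t := by
    have hftc : HasDerivAt
        (fun s => (∫ z in (0:ℝ)..L, ((ρ/2) * (wt z 0)^2 + (T/2) * (wz z 0)^2))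
          + ∫ u in (0:ℝ)..s, (∫ z in (0:ℝ)..L, d z u))
        (∫ z in (0:ℝ)..L, d z t) t := by
      exact ((intervalIntegral.integral_hasStrictDerivAt_right
        (Dcont.intervalIntegrable _ _) ⟨univ, Filter.univ_mem, Dcont.aestronglyMeasurable⟩
        Dcont.continuousAt).hasDerivAt.const_add _)
    exact hftc.hasDerivWithinAt.congr (fun s hs => Gid s hs) (Gid t ht)
  -- identify the derivative
  have hDt : (∫ z in (0:ℝ)..L, d z t) = -k * (∫ y in Lp1..Lp2, wt y t)^2 := by
    have hind : (fun z => g z * wt z t) = (Icc Lp1 Lp2).indicator (fun z => wt z t) := by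
      funext z
      rw [hg]
      by_cases h : Lp1 ≤ z ∧ z ≤ Lp2
      · rw [Set.indicator_of_mem (mem_Icc.2 h)]; simp [h]
      · rw [Set.indicator_of_notMem (fun hm => h (mem_Icc.1 hm))]; simp [h]
    have hint_d : IntervalIntegrable (fun z => d z t) volume 0 L :=
      (dcont.comp (continuous_id.prodMk continuous_const)).intervalIntegrable _ _
    have hwtint : IntegrableOn (fun z => wt z t) (Ioc 0 L) volume :=
      ((wt_z t ht).integrableOn_compact isCompact_Icc).mono_set Ioc_subset_Icc_self
    have hint_gwt : IntervalIntegrable (fun z => g z * wt z t) volume 0 L := by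
      rw [hind, intervalIntegrable_iff_integrableOn_Ioc_of_le hL.le]
      exact hwtint.indicator measurableSet_Icc
    have hgwtI : (∫ z in (0:ℝ)..L, g z * wt z t) = ∫ y in Lp1..Lp2, wt y t := by
      rw [hind, intervalIntegral.integral_of_le hL.le,
        setIntegral_indicator measurableSet_Icc]
      have hae : (Ioc (0:ℝ) L ∩ Icc Lp1 Lp2 : Set ℝ) =ᵐ[volume] (Ioc Lp1 Lp2 : Set ℝ) := by
        refine ae_eq_set.2 ⟨?_, ?_⟩
        · refine measure_mono_null (fun x hx => ?_) (measure_singleton Lp1)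
          obtain ⟨⟨hx1, hx2⟩, hxt⟩ := hx
          have hle : x ≤ Lp1 := by
            by_contra hcon
            exact hxt ⟨lt_of_not_ge hcon, hx2.2⟩
          exact mem_singleton_iff.2 (le_antisymm hle hx2.1)
        · have hsub : Ioc Lp1 Lp2 ⊆ Ioc (0:ℝ) L ∩ Icc Lp1 Lp2 := fun x hx =>
            ⟨⟨hp1.trans_lt hx.1, hx.2.trans hp2⟩, ⟨hx.1.le, hx.2⟩⟩
          rw [Set.diff_eq_empty.2 hsub]
          exact measure_empty
      rw [setIntegral_congr_set hae, ← intervalIntegral.integral_of_le hp12.le]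
    have hcnt : Set.Countable ({Lp1, Lp2} : Set ℝ) :=
      ((Set.finite_singleton Lp2).insert Lp1).countable
    have Hc : ContinuousOn (fun z => T * (wt z t * wz z t)) (Icc 0 L) :=
      continuousOn_const.mul ((wt_z t ht).mul (wz_z t ht))
    have Hd : ∀ x ∈ Ioo (0:ℝ) L \ ({Lp1, Lp2} : Set ℝ),
        HasDerivAt (fun z => T * (wt z t * wz z t))
          (d x t + (k * (∫ y in Lp1..Lp2, wt y t)) * (g x * wt x t)) x := by
      intro x hx
      obtain ⟨hxI, hxs⟩ := hx
      have ne1 : x ≠ Lp1 := fun h => hxs (by simp [h])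
      have ne2 : x ≠ Lp2 := fun h => hxs (by simp [h])
      have hxIcc : x ∈ Icc (0:ℝ) L := ⟨hxI.1.le, hxI.2.le⟩
      have h1 : HasDerivAt (fun y => wt y t) (wtz x t) x :=
        (hwtz x hxIcc t ht).hasDerivAt (Icc_mem_nhds hxI.1 hxI.2)
      have h2 : HasDerivAt (fun y => wz y t) (wzz x t) x := hwzz t ht x hxI ne1 ne2
      have h3 := (h1.fun_mul h2).const_mul T
      refine h3.congr_deriv (Eq.symm ?_)
      have hp := hpde t ht x hxI ne1 ne2
      rw [deq x hxIcc t ht]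
      linear_combination (wt x t) * hp
    have Hi : IntervalIntegrable
        (fun z => d z t + (k * (∫ y in Lp1..Lp2, wt y t)) * (g z * wt z t)) volume 0 L :=
      hint_d.add (hint_gwt.const_mul _)
    have hFTC := MeasureTheory.integral_eq_of_hasDerivAt_off_countable_of_le
      (fun z => T * (wt z t * wz z t))
      (fun z => d z t + (k * (∫ y in Lp1..Lp2, wt y t)) * (g z * wt z t))
      hL.le hcnt Hc Hd Hi
    rw [hbcL t ht, wt0 t ht] at hFTC
    rw [intervalIntegral.integral_add hint_d (hint_gwt.const_mul _),
      intervalIntegral.integral_const_mul, hgwtI] at hFTC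
    nlinarith [hFTC]
  rwa [hDt] at hGt
end

section
/- Dissipativity of the observer-error operator with respect to the energy inner product: Let w : [0,L] → ℝ be twice continuously differentiable with w(0) = 0 and w'(L) = 0, and let p : [0,L] → ℝ be continuously differentiable with p(0) = 0. Then T·∫₀^L (p'(z)/ρ)·w'(z) dz + (1/ρ)·∫₀^L ( T·w''(z) − k·g(z)·∫_{L_{p1}}^{L_{p2}} p(y)/ρ dy )·p(z) dz = −k·( ∫_{L_{p1}}^{L_{p2}} p(y)/ρ dy )², and in particular this quantity is ≤ 0. -/
open Real MeasureTheory Set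

/-- Dissipativity of the observer-error operator with respect to the energy
inner product: `⟨Aχ, χ⟩_X = −k (∫_{Lp1}^{Lp2} p/ρ dy)² ≤ 0`. -/
theorem observer_error_operator_dissipative
    (L T ρ k Lp1 Lp2 : ℝ)
    (hL : 0 < L) (hT : 0 < T) (hρ : 0 < ρ) (hk : 0 < k)
    (hp1 : 0 ≤ Lp1) (hp12 : Lp1 < Lp2) (hp2 : Lp2 ≤ L)
    (g : ℝ → ℝ) (hg : ∀ z, g z = if Lp1 ≤ z ∧ z ≤ Lp2 then 1 else 0)
    (w w' w'' p p' : ℝ → ℝ)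
    -- w is twice continuously differentiable on [0,L]
    (hw : ∀ z ∈ Icc (0:ℝ) L, HasDerivWithinAt w (w' z) (Icc 0 L) z)
    (hw' : ∀ z ∈ Icc (0:ℝ) L, HasDerivWithinAt w' (w'' z) (Icc 0 L) z)
    (hw'' : ContinuousOn w'' (Icc 0 L))
    -- p is continuously differentiable on [0,L]
    (hp : ∀ z ∈ Icc (0:ℝ) L, HasDerivWithinAt p (p' z) (Icc 0 L) z)
    (hp' : ContinuousOn p' (Icc 0 L))
    -- boundary conditions
    (hw0 : w 0 = 0) (hwL : w' L = 0) (hp0 : p 0 = 0) :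
    T * (∫ z in (0:ℝ)..L, (p' z / ρ) * w' z)
        + (1/ρ) * (∫ z in (0:ℝ)..L,
            (T * w'' z - k * g z * ∫ y in Lp1..Lp2, p y / ρ) * p z)
      = -k * (∫ y in Lp1..Lp2, p y / ρ)^2
    ∧ T * (∫ z in (0:ℝ)..L, (p' z / ρ) * w' z)
        + (1/ρ) * (∫ z in (0:ℝ)..L,
            (T * w'' z - k * g z * ∫ y in Lp1..Lp2, p y / ρ) * p z)
      ≤ 0 := by
  -- continuity facts
  have hw'cont : ContinuousOn w' (Icc 0 L) := fun z hz => (hw' z hz).continuousWithinAt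
  have hpcont : ContinuousOn p (Icc 0 L) := fun z hz => (hp z hz).continuousWithinAt
  have huIcc : uIcc (0:ℝ) L = Icc 0 L := uIcc_of_le hL.le
  -- abbreviations
  set C : ℝ := ∫ y in Lp1..Lp2, p y / ρ with hCdef
  set P : ℝ := ∫ y in Lp1..Lp2, p y with hPdef
  have hpInt : IntervalIntegrable p volume 0 L := by
    apply ContinuousOn.intervalIntegrable; rwa [huIcc]
  have hC : C = ρ⁻¹ * P := by
    rw [hCdef, hPdef, ← intervalIntegral.integral_const_mul]
    apply intervalIntegral.integral_congr
    intro y _; simp [div_eq_inv_mul]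
  -- the indicator identity
  have hgp_eq : (fun z => g z * p z) = (Icc Lp1 Lp2).indicator p := by
    funext z
    rw [hg]
    by_cases h : Lp1 ≤ z ∧ z ≤ Lp2 <;> simp [Set.indicator, Set.mem_Icc, h]
  have hgpInt : IntervalIntegrable (fun z => g z * p z) volume 0 L := by
    rw [hgp_eq]
    exact ⟨hpInt.1.indicator measurableSet_Icc, hpInt.2.indicator measurableSet_Icc⟩
  -- ∫₀^L g p = P
  have hsub1 : uIcc (0:ℝ) Lp1 ⊆ uIcc (0:ℝ) L := by
    rw [huIcc, uIcc_of_le hp1]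
    exact Icc_subset_Icc le_rfl (hp12.le.trans hp2)
  have hsub2 : uIcc Lp1 Lp2 ⊆ uIcc (0:ℝ) L := by
    rw [huIcc, uIcc_of_le hp12.le]
    exact Icc_subset_Icc hp1 hp2
  have hsub3 : uIcc Lp2 L ⊆ uIcc (0:ℝ) L := by
    rw [huIcc, uIcc_of_le hp2]
    exact Icc_subset_Icc (hp1.trans hp12.le) le_rfl
  have hae_ne : ∀ᵐ z : ℝ, z ≠ Lp1 := by
    rw [ae_iff]
    have : {z : ℝ | ¬z ≠ Lp1} = {Lp1} := by ext z; simp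
    rw [this]
    exact measure_singleton _
  have hI1 : (∫ z in (0:ℝ)..Lp1, g z * p z) = 0 := by
    rw [intervalIntegral.integral_congr_ae (g := fun _ => (0:ℝ))]
    · simp
    · filter_upwards [hae_ne] with z hz hmem
      rw [Set.uIoc_of_le hp1] at hmem
      have : ¬(Lp1 ≤ z ∧ z ≤ Lp2) := by
        rintro ⟨h1, _⟩
        exact hz (le_antisymm hmem.2 h1)
      rw [hg]; simp [this]
  have hI3 : (∫ z in Lp2..L, g z * p z) = 0 := by
    rw [intervalIntegral.integral_congr_ae (g := fun _ => (0:ℝ))]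
    · simp
    · filter_upwards with z hmem
      rw [Set.uIoc_of_le hp2] at hmem
      have : ¬(Lp1 ≤ z ∧ z ≤ Lp2) := by
        rintro ⟨_, h2⟩
        exact absurd h2 (not_le.mpr hmem.1)
      rw [hg]; simp [this]
  have hI2 : (∫ z in Lp1..Lp2, g z * p z) = P := by
    rw [hPdef]
    apply intervalIntegral.integral_congr_ae
    filter_upwards with z hmem
    rw [Set.uIoc_of_le hp12.le] at hmem
    rw [hg]
    simp [hmem.1.le, hmem.2]
  have hG : (∫ z in (0:ℝ)..L, g z * p z) = P := by
    have e1 := intervalIntegral.integral_add_adjacent_intervals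
      (hgpInt.mono_set hsub1) (hgpInt.mono_set hsub2)
    have hsub12 : uIcc (0:ℝ) Lp2 ⊆ uIcc (0:ℝ) L := by
      rw [huIcc, uIcc_of_le (hp1.trans hp12.le)]
      exact Icc_subset_Icc le_rfl hp2
    have e2 := intervalIntegral.integral_add_adjacent_intervals
      (hgpInt.mono_set hsub12) (hgpInt.mono_set hsub3)
    rw [← e2, ← e1, hI1, hI2, hI3]
    ring
  -- integration by parts
  have hF'int : IntervalIntegrable (fun z => w'' z * p z + w' z * p' z) volume 0 L := by
    apply ContinuousOn.intervalIntegrable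
    rw [huIcc]
    exact (hw''.mul hpcont).add (hw'cont.mul hp')
  have hIBP : (∫ z in (0:ℝ)..L, (w'' z * p z + w' z * p' z)) = w' L * p L - w' 0 * p 0 := by
    apply intervalIntegral.integral_eq_sub_of_hasDeriv_right_of_le hL.le
      (hw'cont.mul hpcont) _ hF'int
    intro x hx
    have hmem : Icc (0:ℝ) L ∈ nhds x := Icc_mem_nhds hx.1 hx.2
    have h1 : HasDerivAt w' (w'' x) x :=
      (hw' x (Ioo_subset_Icc_self hx)).hasDerivAt hmem
    have h2 : HasDerivAt p (p' x) x :=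
      (hp x (Ioo_subset_Icc_self hx)).hasDerivAt hmem
    exact (h1.mul h2).hasDerivWithinAt
  have hIBP0 : (∫ z in (0:ℝ)..L, (w'' z * p z + w' z * p' z)) = 0 := by
    rw [hIBP, hwL, hp0]; ring
  have hwpInt : IntervalIntegrable (fun z => w'' z * p z) volume 0 L := by
    apply ContinuousOn.intervalIntegrable; rw [huIcc]; exact hw''.mul hpcont
  have hpwInt : IntervalIntegrable (fun z => w' z * p' z) volume 0 L := by
    apply ContinuousOn.intervalIntegrable; rw [huIcc]; exact hw'cont.mul hp'
  set A : ℝ := ∫ z in (0:ℝ)..L, p' z * w' z with hAdef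
  set B : ℝ := ∫ z in (0:ℝ)..L, w'' z * p z with hBdef
  have hAB : B + A = 0 := by
    rw [hAdef, hBdef]
    have : (∫ z in (0:ℝ)..L, p' z * w' z) = ∫ z in (0:ℝ)..L, w' z * p' z := by
      apply intervalIntegral.integral_congr; intro z _; ring
    rw [this, ← intervalIntegral.integral_add hwpInt hpwInt, hIBP0]
  -- first integral
  have h1st : (∫ z in (0:ℝ)..L, (p' z / ρ) * w' z) = ρ⁻¹ * A := by
    rw [hAdef, ← intervalIntegral.integral_const_mul]
    apply intervalIntegral.integral_congr; intro z _; ring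
  -- second integral
  have h2nd : (∫ z in (0:ℝ)..L, (T * w'' z - k * g z * C) * p z)
      = T * B - (k * C) * P := by
    have heq : (fun z => (T * w'' z - k * g z * C) * p z)
        = fun z => T * (w'' z * p z) - (k * C) * (g z * p z) := by
      funext z; ring
    rw [heq, intervalIntegral.integral_sub (hwpInt.const_mul T) (hgpInt.const_mul (k * C)),
      intervalIntegral.integral_const_mul, intervalIntegral.integral_const_mul, hG, hBdef]
  have hmain : T * (∫ z in (0:ℝ)..L, (p' z / ρ) * w' z)
      + (1/ρ) * (∫ z in (0:ℝ)..L, (T * w'' z - k * g z * C) * p z)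
      = -k * C ^ 2 := by
    rw [h1st, h2nd, hC]
    have hA : A = -B := by linarith
    rw [hA]
    field_simp
    ring
  refine ⟨hmain, ?_⟩
  rw [hmain]
  have := mul_nonneg hk.le (sq_nonneg C)
  linarith
end

section
/- Boundedness of the inverse of the observer-error operator: There exists a constant C > 0, depending only on T, ρ, k, L, L_{p1}, L_{p2}, such that for every continuously differentiable f : [0,L] → ℝ with f(0) = 0 and every continuous h : [0,L] → ℝ, the functions p̃ = ρ·f, G = ∫_{L_{p1}}^{L_{p2}} f(y) dy, W₁(z) = −(1/T)·( ∫_z^L h(y) dy + k·G·∫_z^L g(y) dy ) and W(z) = ∫₀^z W₁(y) dy satisfy ∫₀^L W² dz + ∫₀^L W₁² dz + ∫₀^L ( (h(z) + k·g(z)·G)/T )² dz + ∫₀^L p̃² dz + ∫₀^L (p̃')² dz ≤ C·( ∫₀^L f² dz + ∫₀^L (f')² dz + ∫₀^L h² dz ). In other words, the inverse operator A⁻¹ maps bounded sets of the state space into bounded sets of (H² ∩ H¹_C) × H¹_C. -/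
open Real MeasureTheory Set

lemma sq_integral_le_cs (a b : ℝ) (hab : a ≤ b) (u : ℝ → ℝ)
    (hu : IntervalIntegrable u volume a b)
    (hu2 : IntervalIntegrable (fun y => (u y)^2) volume a b) :
    (∫ y in a..b, u y)^2 ≤ (b - a) * ∫ y in a..b, (u y)^2 := by
  rcases eq_or_lt_of_le hab with rfl | hlt
  · simp
  set S := ∫ y in a..b, u y with hS
  set Q := ∫ y in a..b, (u y)^2 with hQ
  have hd : 0 < b - a := by linarith
  set c : ℝ := S / (b - a) with hc
  have h1 : (0:ℝ) ≤ ∫ y in a..b, (u y - c)^2 :=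
    intervalIntegral.integral_nonneg hab (fun y _ => sq_nonneg _)
  have h2 : (∫ y in a..b, (u y - c)^2) = Q - 2*c*S + (b-a)*c^2 := by
    have he : ∀ y, (u y - c)^2 = ((u y)^2 - (2*c) * u y) + c^2 := fun y => by ring
    simp_rw [he]
    rw [intervalIntegral.integral_add (hu2.sub (hu.const_mul _)) intervalIntegrable_const,
        intervalIntegral.integral_sub hu2 (hu.const_mul _),
        intervalIntegral.integral_const_mul, intervalIntegral.integral_const]
    simp only [smul_eq_mul, ← hS, ← hQ]
  have h3 : 0 ≤ Q - 2*c*S + (b-a)*c^2 := h2 ▸ h1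
  have hk1 : (b-a)*c^2 = S^2/(b-a) := by
    rw [hc]; field_simp
  have hk2 : 2*c*S = 2*(S^2/(b-a)) := by
    rw [hc]; field_simp
  rw [hk1, hk2] at h3
  have h4 : S^2/(b-a) ≤ Q := by linarith
  rw [div_le_iff₀ hd] at h4
  linarith [h4]

set_option maxHeartbeats 1600000 in
/-- Boundedness of the inverse of the observer-error operator: there is a
constant `C > 0`, depending only on the physical parameters, bounding the
`(H² ∩ H¹_C) × H¹_C`-norm of the solution `(W, p̃)` of the resolvent equation
`A(W, p̃) = (f, h)` in terms of the `H¹ × L²`-norm of the data `(f, h)`. -/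
theorem inverse_observer_error_operator_bounded
    (L T ρ k Lp1 Lp2 : ℝ)
    (hL : 0 < L) (hT : 0 < T) (hρ : 0 < ρ) (hk : 0 < k)
    (hp1 : 0 ≤ Lp1) (hp12 : Lp1 < Lp2) (hp2 : Lp2 ≤ L)
    (g : ℝ → ℝ) (hg : ∀ z, g z = if Lp1 ≤ z ∧ z ≤ Lp2 then 1 else 0) :
    ∃ C : ℝ, 0 < C ∧
      ∀ (f f' h : ℝ → ℝ),
        (∀ z ∈ Icc (0:ℝ) L, HasDerivWithinAt f (f' z) (Icc 0 L) z) →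
        ContinuousOn f' (Icc 0 L) →
        f 0 = 0 →
        ContinuousOn h (Icc 0 L) →
        ∀ (G : ℝ), G = (∫ y in Lp1..Lp2, f y) →
        ∀ (p W₁ W : ℝ → ℝ),
          (∀ z, p z = ρ * f z) →
          (∀ z, W₁ z = -(1/T) * ((∫ y in z..L, h y) + k * G * ∫ y in z..L, g y)) →
          (∀ z, W z = ∫ y in (0:ℝ)..z, W₁ y) →
          (∫ z in (0:ℝ)..L, (W z)^2) + (∫ z in (0:ℝ)..L, (W₁ z)^2)
            + (∫ z in (0:ℝ)..L, ((h z + k * g z * G) / T)^2)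
            + (∫ z in (0:ℝ)..L, (p z)^2) + (∫ z in (0:ℝ)..L, (ρ * f' z)^2)
          ≤ C * ((∫ z in (0:ℝ)..L, (f z)^2) + (∫ z in (0:ℝ)..L, (f' z)^2)
            + (∫ z in (0:ℝ)..L, (h z)^2)) := by
  refine ⟨((L^4+L^2+1)/T^2) * (2 + 2*k^2*L^2) + ρ^2 + 1, by positivity, ?_⟩
  intro f f' h hder hf'c hf0 hhc G hG p W₁ W hp hW₁d hWd
  have hL0 : (0:ℝ) ≤ L := hL.le
  have hIccUIcc : uIcc (0:ℝ) L = Icc 0 L := uIcc_of_le hL0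
  have hfc : ContinuousOn f (Icc 0 L) := fun z hz => (hder z hz).continuousWithinAt
  -- indicator representation of g
  have hgind : g = (Icc Lp1 Lp2).indicator (fun _ => (1:ℝ)) := by
    funext z; rw [hg z]; simp [Set.indicator, mem_Icc]
  have hgInt : MeasureTheory.Integrable g volume := by
    rw [hgind]
    exact (integrable_indicator_iff measurableSet_Icc).2
      (integrableOn_const measure_Icc_lt_top.ne)
  have hgII : ∀ a b : ℝ, IntervalIntegrable g volume a b := fun a b => hgInt.intervalIntegrable
  have hg0 : ∀ z, 0 ≤ g z := by intro z; rw [hg]; split <;> norm_num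
  have hg1 : ∀ z, g z ≤ 1 := by intro z; rw [hg]; split <;> norm_num
  have hgsq : ∀ z, (g z)^2 = g z := by intro z; rw [hg]; split <;> norm_num
  -- subinterval inclusions
  have hsub : ∀ z ∈ Icc (0:ℝ) L, uIcc z L ⊆ Icc 0 L := by
    intro z hz; rw [uIcc_of_le hz.2]; exact Icc_subset_Icc hz.1 le_rfl
  -- integrabilities on [0, L]
  have hfI : IntervalIntegrable f volume 0 L := (hfc.mono hIccUIcc.subset).intervalIntegrable
  have hf2I : IntervalIntegrable (fun z => (f z)^2) volume 0 L :=
    ((hfc.pow 2).mono hIccUIcc.subset).intervalIntegrable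
  have hhI : IntervalIntegrable h volume 0 L := (hhc.mono hIccUIcc.subset).intervalIntegrable
  have hh2I : IntervalIntegrable (fun z => (h z)^2) volume 0 L :=
    ((hhc.pow 2).mono hIccUIcc.subset).intervalIntegrable
  -- the key quantities
  set If := ∫ z in (0:ℝ)..L, (f z)^2 with hIf
  set If' := ∫ z in (0:ℝ)..L, (f' z)^2 with hIf'
  set Ih := ∫ z in (0:ℝ)..L, (h z)^2 with hIh
  have hIfnn : 0 ≤ If := intervalIntegral.integral_nonneg hL0 (fun y _ => sq_nonneg _)
  have hIf'nn : 0 ≤ If' := intervalIntegral.integral_nonneg hL0 (fun y _ => sq_nonneg _)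
  have hIhnn : 0 ≤ Ih := intervalIntegral.integral_nonneg hL0 (fun y _ => sq_nonneg _)
  -- bound on G
  have hsubp : uIcc Lp1 Lp2 ⊆ Icc 0 L := by
    rw [uIcc_of_le hp12.le]; exact Icc_subset_Icc hp1 hp2
  have hG2 : G^2 ≤ L * If := by
    have h1 : G^2 ≤ (Lp2 - Lp1) * ∫ y in Lp1..Lp2, (f y)^2 := by
      rw [hG]
      exact sq_integral_le_cs Lp1 Lp2 hp12.le f
        ((hfc.mono hsubp).intervalIntegrable) (((hfc.pow 2).mono hsubp).intervalIntegrable)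
    have h2 : (∫ y in Lp1..Lp2, (f y)^2) ≤ If :=
      intervalIntegral.integral_mono_interval hp1 hp12.le hp2
        (ae_of_all _ (fun y => sq_nonneg _)) hf2I
    have h3 : (0:ℝ) ≤ ∫ y in Lp1..Lp2, (f y)^2 :=
      intervalIntegral.integral_nonneg hp12.le (fun y _ => sq_nonneg _)
    nlinarith
  -- the function q and its square
  have hq2eq : ∀ z, (h z + k * g z * G)^2
      = (h z)^2 + (2*k*G)*(g z * h z) + (k^2*G^2) * g z := by
    intro z; linear_combination (k^2*G^2) * (hgsq z)
  have hghind : (fun z => g z * h z) = (Icc Lp1 Lp2).indicator h := by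
    funext z; rw [hgind]; by_cases hz : z ∈ Icc Lp1 Lp2 <;> simp [hz]
  have hghI : IntervalIntegrable (fun z => g z * h z) volume 0 L := by
    rw [hghind]
    exact ((integrable_indicator_iff measurableSet_Icc).2
      ((hhc.mono (Icc_subset_Icc hp1 hp2)).integrableOn_Icc)).intervalIntegrable
  have hq2I : IntervalIntegrable (fun z => (h z + k * g z * G)^2) volume 0 L := by
    have heq : (fun z => (h z + k * g z * G)^2)
        = fun z => (h z)^2 + (2*k*G)*(g z * h z) + (k^2*G^2) * g z := funext hq2eq
    rw [heq]
    exact (hh2I.add (hghI.const_mul _)).add ((hgII 0 L).const_mul _)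
  set Q := ∫ z in (0:ℝ)..L, (h z + k * g z * G)^2 with hQdef
  have hQnn : 0 ≤ Q := intervalIntegral.integral_nonneg hL0 (fun y _ => sq_nonneg _)
  -- bound on Q
  have hQle : Q ≤ 2*Ih + L*(2*k^2*G^2) := by
    have hpt : ∀ z ∈ Icc (0:ℝ) L, (h z + k * g z * G)^2 ≤ 2*(h z)^2 + 2*k^2*G^2 := by
      intro z _
      have h1 : (k * g z * G)^2 = k^2*G^2*(g z) := by linear_combination k^2*G^2 * hgsq z
      nlinarith [sq_nonneg (h z - k * g z * G), hg1 z, hg0 z, sq_nonneg (k*G), sq_nonneg (h z)]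
    have hmono := intervalIntegral.integral_mono_on hL0 hq2I
      ((hh2I.const_mul 2).add intervalIntegrable_const) hpt
    rw [intervalIntegral.integral_add (hh2I.const_mul 2) intervalIntegrable_const,
        intervalIntegral.integral_const_mul, intervalIntegral.integral_const] at hmono
    simp only [smul_eq_mul, sub_zero] at hmono
    linarith [hmono]
  -- W₁ rewritten via q
  have hW₁q : ∀ z ∈ Icc (0:ℝ) L,
      W₁ z = -(1/T) * ∫ y in z..L, (h y + k * g y * G) := by
    intro z hz
    have hh' : IntervalIntegrable h volume z L := (hhc.mono (hsub z hz)).intervalIntegrable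
    have he : ∀ y, h y + k * g y * G = h y + (k*G) * g y := fun y => by ring
    rw [hW₁d z]
    simp_rw [he]
    rw [intervalIntegral.integral_add hh' ((hgII z L).const_mul (k*G)),
        intervalIntegral.integral_const_mul]
  set M := L * Q / T^2 with hM
  have hW1b : ∀ z ∈ Icc (0:ℝ) L, (W₁ z)^2 ≤ M := by
    intro z hz
    have hq2I' : IntervalIntegrable (fun y => (h y + k * g y * G)^2) volume z L :=
      hq2I.mono_set (by rw [hIccUIcc]; exact hsub z hz)
    have hqI' : IntervalIntegrable (fun y => h y + k * g y * G) volume z L := by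
      have he : (fun y => h y + k * g y * G) = fun y => h y + (k*G) * g y := by
        funext y; ring
      rw [he]
      exact ((hhc.mono (hsub z hz)).intervalIntegrable).add ((hgII z L).const_mul (k*G))
    have hcs := sq_integral_le_cs z L hz.2 _ hqI' hq2I'
    have hsub2 : (∫ y in z..L, (h y + k * g y * G)^2) ≤ Q :=
      intervalIntegral.integral_mono_interval hz.1 hz.2 le_rfl
        (ae_of_all _ (fun y => sq_nonneg _)) hq2I
    have hle : (∫ y in z..L, (h y + k * g y * G))^2 ≤ L * Q := by
      have hnn : (0:ℝ) ≤ ∫ y in z..L, (h y + k * g y * G)^2 :=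
        intervalIntegral.integral_nonneg hz.2 (fun y _ => sq_nonneg _)
      nlinarith [hz.1, hz.2]
    have heq : (W₁ z)^2 = (∫ y in z..L, (h y + k * g y * G))^2 / T^2 := by
      rw [hW₁q z hz]; ring
    rw [heq, hM]
    exact div_le_div_of_nonneg_right hle (by positivity) |>.trans_eq rfl
  -- continuity of W₁
  have hHh : ContinuousOn (fun z => ∫ y in z..L, h y) (Icc 0 L) := by
    have := intervalIntegral.continuousOn_primitive_interval_left
      (f := h) (a := (0:ℝ)) (b := L) (μ := volume) (by rw [hIccUIcc]; exact hhc.integrableOn_Icc)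
    rwa [hIccUIcc] at this
  have hHg : ContinuousOn (fun z => ∫ y in z..L, g y) (Icc 0 L) := by
    have := intervalIntegral.continuousOn_primitive_interval_left
      (f := g) (a := (0:ℝ)) (b := L) (μ := volume)
      (by rw [hIccUIcc]; exact hgInt.integrableOn)
    rwa [hIccUIcc] at this
  have hW₁c : ContinuousOn W₁ (Icc 0 L) := by
    have he : W₁ = fun z => -(1/T) * ((∫ y in z..L, h y) + k * G * ∫ y in z..L, g y) :=
      funext hW₁d
    rw [he]
    exact continuousOn_const.mul (hHh.add (continuousOn_const.mul hHg))
  have hW₁I : IntervalIntegrable W₁ volume 0 L := (hW₁c.mono hIccUIcc.subset).intervalIntegrable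
  have hW₁2I : IntervalIntegrable (fun z => (W₁ z)^2) volume 0 L :=
    ((hW₁c.pow 2).mono hIccUIcc.subset).intervalIntegrable
  set IW1 := ∫ z in (0:ℝ)..L, (W₁ z)^2 with hIW1
  have hIW1nn : 0 ≤ IW1 := intervalIntegral.integral_nonneg hL0 (fun y _ => sq_nonneg _)
  have hIW1le : IW1 ≤ L * M := by
    have hmono := intervalIntegral.integral_mono_on hL0 hW₁2I intervalIntegrable_const hW1b
    rw [intervalIntegral.integral_const] at hmono
    simpa using hmono
  -- W bounds
  have hWb : ∀ z ∈ Icc (0:ℝ) L, (W z)^2 ≤ L * IW1 := by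
    intro z hz
    have hsub0 : uIcc (0:ℝ) z ⊆ uIcc (0:ℝ) L := by
      rw [hIccUIcc, uIcc_of_le hz.1]; exact Icc_subset_Icc le_rfl hz.2
    have hcs := sq_integral_le_cs 0 z hz.1 W₁ (hW₁I.mono_set hsub0) (hW₁2I.mono_set hsub0)
    have hsub2 : (∫ y in (0:ℝ)..z, (W₁ y)^2) ≤ IW1 :=
      intervalIntegral.integral_mono_interval le_rfl hz.1 hz.2
        (ae_of_all _ (fun y => sq_nonneg _)) hW₁2I
    have hnn : (0:ℝ) ≤ ∫ y in (0:ℝ)..z, (W₁ y)^2 :=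
      intervalIntegral.integral_nonneg hz.1 (fun y _ => sq_nonneg _)
    rw [hWd z]
    nlinarith [hz.1, hz.2]
  have hWc : ContinuousOn W (Icc 0 L) := by
    have he : W = fun z => ∫ y in (0:ℝ)..z, W₁ y := funext hWd
    rw [he]
    have := intervalIntegral.continuousOn_primitive_interval
      (f := W₁) (a := (0:ℝ)) (b := L) (μ := volume)
      (by rw [hIccUIcc]; exact hW₁c.integrableOn_Icc)
    rwa [hIccUIcc] at this
  have hW2I : IntervalIntegrable (fun z => (W z)^2) volume 0 L :=
    ((hWc.pow 2).mono hIccUIcc.subset).intervalIntegrable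
  have hIWle : (∫ z in (0:ℝ)..L, (W z)^2) ≤ L * (L * IW1) := by
    have hmono := intervalIntegral.integral_mono_on hL0 hW2I intervalIntegrable_const hWb
    rw [intervalIntegral.integral_const] at hmono
    simpa using hmono
  -- rewrite remaining terms of the goal
  have hterm3 : (∫ z in (0:ℝ)..L, ((h z + k * g z * G) / T)^2) = Q / T^2 := by
    simp_rw [div_pow]
    rw [intervalIntegral.integral_div]
  have hterm4 : (∫ z in (0:ℝ)..L, (p z)^2) = ρ^2 * If := by
    have he : (fun z => (p z)^2) = fun z => ρ^2 * (f z)^2 := by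
      funext z; rw [hp z]; ring
    rw [he, intervalIntegral.integral_const_mul]
  have hterm5 : (∫ z in (0:ℝ)..L, (ρ * f' z)^2) = ρ^2 * If' := by
    have he : (fun z => (ρ * f' z)^2) = fun z => ρ^2 * (f' z)^2 := by
      funext z; ring
    rw [he, intervalIntegral.integral_const_mul]
  rw [hterm3, hterm4, hterm5]
  -- final assembly
  set E := If + If' + Ih with hE
  have hEnn : 0 ≤ E := by rw [hE]; linarith
  have hQE : Q ≤ (2 + 2*k^2*L^2) * E := by
    have h1 := mul_le_mul_of_nonneg_left hG2 (show (0:ℝ) ≤ 2*k^2*L by positivity)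
    have h2 : (0:ℝ) ≤ 2*k^2*L^2*If' := by positivity
    have h3 : (0:ℝ) ≤ 2*k^2*L^2*Ih := by positivity
    rw [hE]
    linarith [hQle, h1, h2, h3, hIfnn, hIf'nn]
  have hA : (0:ℝ) < (L^4+L^2+1)/T^2 := by positivity
  have hQmul : ((L^4+L^2+1)/T^2) * Q ≤ ((L^4+L^2+1)/T^2) * ((2 + 2*k^2*L^2) * E) :=
    mul_le_mul_of_nonneg_left hQE hA.le
  have hIW1leQ : IW1 ≤ L^2 * Q / T^2 := by
    rw [hM] at hIW1le
    have he : L * (L * Q / T^2) = L^2 * Q / T^2 := by ring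
    linarith [hIW1le]
  have hIWleQ : (∫ z in (0:ℝ)..L, (W z)^2) ≤ L^4 * Q / T^2 := by
    have h2 := mul_le_mul_of_nonneg_left hIW1leQ (by positivity : (0:ℝ) ≤ L^2)
    have he1 : L * (L * IW1) = L^2 * IW1 := by ring
    have he2 : L^2 * (L^2 * Q / T^2) = L^4 * Q / T^2 := by ring
    linarith [hIWle, h2]
  have hT2 : (0:ℝ) < T^2 := by positivity
  have hsum : (∫ z in (0:ℝ)..L, (W z)^2) + IW1 + Q/T^2 ≤ ((L^4+L^2+1)/T^2) * Q := by
    have : ((L^4+L^2+1)/T^2) * Q = L^4*Q/T^2 + L^2*Q/T^2 + Q/T^2 := by ring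
    linarith [hIWleQ, hIW1leQ]
  have h9 : (0:ℝ) ≤ ρ^2*Ih := mul_nonneg (sq_nonneg ρ) hIhnn
  have hexp : (((L^4+L^2+1)/T^2) * (2 + 2*k^2*L^2) + ρ^2 + 1) * E
      = ((L^4+L^2+1)/T^2) * ((2 + 2*k^2*L^2) * E) + ρ^2*If + ρ^2*If' + ρ^2*Ih + E := by
    rw [hE]; ring
  linarith [hsum, hQmul, hexp, h9, hEnn]
end

section
/- Actuator-length condition guaranteeing non-vanishing modal integrals: Let L > 0, let k be a positive integer, set ω_k = (k − 1/2)·π/L, and let 0 ≤ L_{p1} < L_{p2} ≤ L. If for every positive integer j one has L_{p2} − L_{p1} ≠ 4·L·j/(2k − 1) and L_{p2} + L_{p1} ≠ 4·L·j/(2k − 1), then ∫_{L_{p1}}^{L_{p2}} sin(ω_k·z) dz ≠ 0. -/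
open Real Set intervalIntegral

/-- Actuator-length condition guaranteeing non-vanishing modal integrals:
if `Lp2 − Lp1 ≠ 4Lj/(2k−1)` and `Lp2 + Lp1 ≠ 4Lj/(2k−1)` for every positive
integer `j`, then `∫_{Lp1}^{Lp2} sin(ω_k z) dz ≠ 0` for `ω_k = (k−1/2)π/L`. -/
theorem actuator_length_condition_nonvanishing_integral
    (L : ℝ) (hL : 0 < L)
    (k : ℕ) (hk : 0 < k)
    (ω : ℝ) (hω : ω = ((k : ℝ) - 1/2) * π / L)
    (Lp1 Lp2 : ℝ) (hp1 : 0 ≤ Lp1) (hp12 : Lp1 < Lp2) (hp2 : Lp2 ≤ L)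
    (hlen : ∀ j : ℕ, 0 < j →
      Lp2 - Lp1 ≠ 4 * L * (j : ℝ) / (2 * (k : ℝ) - 1)
      ∧ Lp2 + Lp1 ≠ 4 * L * (j : ℝ) / (2 * (k : ℝ) - 1)) :
    (∫ z in Lp1..Lp2, Real.sin (ω * z)) ≠ 0 := by
  have hk1 : (1 : ℝ) ≤ (k : ℝ) := by exact_mod_cast hk
  have hkpos : (0:ℝ) < 2 * (k : ℝ) - 1 := by linarith
  have hωpos : 0 < ω := by
    rw [hω]
    apply div_pos (mul_pos (by linarith) Real.pi_pos) hL
  have hval : (∫ z in Lp1..Lp2, Real.sin (ω * z))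
      = ω⁻¹ * (Real.cos (ω * Lp1) - Real.cos (ω * Lp2)) := by
    rw [intervalIntegral.integral_comp_mul_left _ hωpos.ne', integral_sin, smul_eq_mul]
  rw [hval]
  intro h
  have hcos : Real.cos (ω * Lp1) = Real.cos (ω * Lp2) := by
    rcases mul_eq_zero.mp h with h1 | h2
    · exact absurd h1 (inv_ne_zero hωpos.ne')
    · linarith
  rw [Real.cos_eq_cos_iff] at hcos
  obtain ⟨n, hn | hn⟩ := hcos
  · -- ω * Lp2 = 2 n π + ω * Lp1
    have hdiff : ω * (Lp2 - Lp1) = 2 * n * π := by ring_nf; ring_nf at hn; linarith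
    have hnpos : (0:ℝ) < (n:ℝ) := by
      nlinarith [Real.pi_pos, mul_pos hωpos (sub_pos.mpr hp12)]
    have hnpos' : 0 < n := by exact_mod_cast hnpos
    have := (hlen n.toNat (by omega)).1
    apply this
    have hcast : ((n.toNat : ℕ) : ℝ) = (n : ℝ) := by
      exact_mod_cast congrArg (Int.cast : ℤ → ℝ) (Int.toNat_of_nonneg hnpos'.le)
    rw [hcast]
    rw [hω] at hdiff
    field_simp at hdiff
    have h2 : π * ((2*(k:ℝ)-1)*(Lp2-Lp1)) = π * (4*L*n) := by linear_combination π * hdiff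
    have h3 := mul_left_cancel₀ Real.pi_ne_zero h2
    field_simp
    linarith
  · -- ω * Lp2 = 2 n π - ω * Lp1
    have hdiff : ω * (Lp2 + Lp1) = 2 * n * π := by ring_nf; ring_nf at hn; linarith
    have hnpos : (0:ℝ) < (n:ℝ) := by
      nlinarith [Real.pi_pos, mul_pos hωpos (by linarith : (0:ℝ) < Lp2 + Lp1)]
    have hnpos' : 0 < n := by exact_mod_cast hnpos
    have := (hlen n.toNat (by omega)).2
    apply this
    have hcast : ((n.toNat : ℕ) : ℝ) = (n : ℝ) := by
      exact_mod_cast congrArg (Int.cast : ℤ → ℝ) (Int.toNat_of_nonneg hnpos'.le)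
    rw [hcast]
    rw [hω] at hdiff
    field_simp at hdiff
    have h2 : π * ((2*(k:ℝ)-1)*(Lp2+Lp1)) = π * (4*L*n) := by linear_combination π * hdiff
    have h3 := mul_left_cancel₀ Real.pi_ne_zero h2
    field_simp
    linarith
end

section
/- Vanishing of an ℓ²-coefficient trigonometric series with nonzero modal weights: Let L > 0, ϑ > 0 and 0 ≤ a < b ≤ L. For positive integers k set ω_k = (k − 1/2)·π/L and γ_k = ∫_a^b sin(ω_k·z) dz, and assume γ_k ≠ 0 for every k ≥ 1. Let (a_k)_{k≥1} and (b_k)_{k≥1} be real sequences with Σ_{k=1}^∞ (a_k² + b_k²) < ∞. If for every t ≥ 0 the family ( (a_k·cos(ω_k·ϑ·t) + b_k·sin(ω_k·ϑ·t))·γ_k )_{k≥1} is summable with sum equal to 0, then a_k = 0 and b_k = 0 for every k ≥ 1. -/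
open Real Set intervalIntegral

lemma my_int_cos (μ0 : ℝ) (hμ0 : 0 < μ0) (m : ℤ) :
    ∫ t in (0:ℝ)..(2*π/μ0), Real.cos ((m:ℝ) * μ0 * t) =
      if m = 0 then 2*π/μ0 else 0 := by
  rcases eq_or_ne m 0 with h | h
  · simp [h]
  · have hc : (m:ℝ) * μ0 ≠ 0 := mul_ne_zero (Int.cast_ne_zero.mpr h) hμ0.ne'
    rw [if_neg h]
    have := intervalIntegral.integral_comp_mul_left (a := (0:ℝ)) (b := 2*π/μ0)
      (f := Real.cos) (c := (m:ℝ)*μ0) hc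
    rw [this, mul_zero, integral_cos]
    have e : (m:ℝ) * μ0 * (2*π/μ0) = ((2*m : ℤ) : ℝ) * π := by
      push_cast; field_simp
    rw [e, Real.sin_int_mul_pi, Real.sin_zero]
    simp

lemma my_int_sin (μ0 : ℝ) (hμ0 : 0 < μ0) (m : ℤ) :
    ∫ t in (0:ℝ)..(2*π/μ0), Real.sin ((m:ℝ) * μ0 * t) = 0 := by
  rcases eq_or_ne m 0 with h | h
  · simp [h]
  · have hc : (m:ℝ) * μ0 ≠ 0 := mul_ne_zero (Int.cast_ne_zero.mpr h) hμ0.ne'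
    have := intervalIntegral.integral_comp_mul_left (a := (0:ℝ)) (b := 2*π/μ0)
      (f := Real.sin) (c := (m:ℝ)*μ0) hc
    rw [this, mul_zero, integral_sin]
    have e : (m:ℝ) * μ0 * (2*π/μ0) = (m : ℝ) * (2*π) := by
      field_simp
    rw [e, Real.cos_int_mul_two_pi, Real.cos_zero]
    simp

lemma my_orth_cc (μ0 : ℝ) (hμ0 : 0 < μ0) (m n : ℤ) (hm : 0 < m) (hn : 0 < n) :
    ∫ t in (0:ℝ)..(2*π/μ0), Real.cos ((m:ℝ) * μ0 * t) * Real.cos ((n:ℝ) * μ0 * t) =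
      if m = n then π/μ0 else 0 := by
  have key : ∀ t : ℝ, Real.cos ((m:ℝ) * μ0 * t) * Real.cos ((n:ℝ) * μ0 * t) =
      (Real.cos (((m-n : ℤ):ℝ) * μ0 * t) + Real.cos (((m+n : ℤ):ℝ) * μ0 * t)) / 2 := by
    intro t
    have h2 := Real.two_mul_cos_mul_cos ((m:ℝ) * μ0 * t) ((n:ℝ) * μ0 * t)
    have e1 : (m:ℝ) * μ0 * t - (n:ℝ) * μ0 * t = ((m-n : ℤ):ℝ) * μ0 * t := by push_cast; ring
    have e2 : (m:ℝ) * μ0 * t + (n:ℝ) * μ0 * t = ((m+n : ℤ):ℝ) * μ0 * t := by push_cast; ring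
    rw [e1, e2] at h2; linarith
  rw [intervalIntegral.integral_congr (g := fun t =>
      (Real.cos (((m-n : ℤ):ℝ) * μ0 * t) + Real.cos (((m+n : ℤ):ℝ) * μ0 * t)) / 2)
      (fun t _ => key t)]
  rw [intervalIntegral.integral_div, intervalIntegral.integral_add
      (Continuous.intervalIntegrable (by fun_prop) _ _)
      (Continuous.intervalIntegrable (by fun_prop) _ _)]
  rw [my_int_cos μ0 hμ0, my_int_cos μ0 hμ0, if_neg (by omega : ¬ m + n = 0)]
  by_cases h : m = n
  · rw [if_pos h, if_pos (by omega), add_zero]; ring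
  · rw [if_neg h, if_neg (by omega)]; norm_num

lemma my_orth_sc (μ0 : ℝ) (hμ0 : 0 < μ0) (m n : ℤ) :
    ∫ t in (0:ℝ)..(2*π/μ0), Real.sin ((m:ℝ) * μ0 * t) * Real.cos ((n:ℝ) * μ0 * t) = 0 := by
  have key : ∀ t : ℝ, Real.sin ((m:ℝ) * μ0 * t) * Real.cos ((n:ℝ) * μ0 * t) =
      (Real.sin (((m-n : ℤ):ℝ) * μ0 * t) + Real.sin (((m+n : ℤ):ℝ) * μ0 * t)) / 2 := by
    intro t
    have h2 := Real.two_mul_sin_mul_cos ((m:ℝ) * μ0 * t) ((n:ℝ) * μ0 * t)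
    have e1 : (m:ℝ) * μ0 * t - (n:ℝ) * μ0 * t = ((m-n : ℤ):ℝ) * μ0 * t := by push_cast; ring
    have e2 : (m:ℝ) * μ0 * t + (n:ℝ) * μ0 * t = ((m+n : ℤ):ℝ) * μ0 * t := by push_cast; ring
    rw [e1, e2] at h2; linarith
  rw [intervalIntegral.integral_congr (g := fun t =>
      (Real.sin (((m-n : ℤ):ℝ) * μ0 * t) + Real.sin (((m+n : ℤ):ℝ) * μ0 * t)) / 2)
      (fun t _ => key t)]
  rw [intervalIntegral.integral_div, intervalIntegral.integral_add
      (Continuous.intervalIntegrable (by fun_prop) _ _)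
      (Continuous.intervalIntegrable (by fun_prop) _ _)]
  rw [my_int_sin μ0 hμ0, my_int_sin μ0 hμ0]
  norm_num

lemma my_orth_ss (μ0 : ℝ) (hμ0 : 0 < μ0) (m n : ℤ) (hm : 0 < m) (hn : 0 < n) :
    ∫ t in (0:ℝ)..(2*π/μ0), Real.sin ((m:ℝ) * μ0 * t) * Real.sin ((n:ℝ) * μ0 * t) =
      if m = n then π/μ0 else 0 := by
  have key : ∀ t : ℝ, Real.sin ((m:ℝ) * μ0 * t) * Real.sin ((n:ℝ) * μ0 * t) =
      (Real.cos (((m-n : ℤ):ℝ) * μ0 * t) - Real.cos (((m+n : ℤ):ℝ) * μ0 * t)) / 2 := by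
    intro t
    have h2 := Real.two_mul_sin_mul_sin ((m:ℝ) * μ0 * t) ((n:ℝ) * μ0 * t)
    have e1 : (m:ℝ) * μ0 * t - (n:ℝ) * μ0 * t = ((m-n : ℤ):ℝ) * μ0 * t := by push_cast; ring
    have e2 : (m:ℝ) * μ0 * t + (n:ℝ) * μ0 * t = ((m+n : ℤ):ℝ) * μ0 * t := by push_cast; ring
    rw [e1, e2] at h2; linarith
  rw [intervalIntegral.integral_congr (g := fun t =>
      (Real.cos (((m-n : ℤ):ℝ) * μ0 * t) - Real.cos (((m+n : ℤ):ℝ) * μ0 * t)) / 2)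
      (fun t _ => key t)]
  rw [intervalIntegral.integral_div, intervalIntegral.integral_sub
      (Continuous.intervalIntegrable (by fun_prop) _ _)
      (Continuous.intervalIntegrable (by fun_prop) _ _)]
  rw [my_int_cos μ0 hμ0, my_int_cos μ0 hμ0, if_neg (by omega : ¬ m + n = 0)]
  by_cases h : m = n
  · rw [if_pos h, if_pos (by omega), sub_zero]; ring
  · rw [if_neg h, if_neg (by omega)]; norm_num

/-- Vanishing of an ℓ²-coefficient trigonometric series with nonzero modal
weights: if `Σ_{k≥1} (a_k cos(ω_k ϑ t) + b_k sin(ω_k ϑ t)) γ_k = 0` for all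
`t ≥ 0`, with `γ_k = ∫_a^b sin(ω_k z) dz ≠ 0` and ℓ² coefficients, then all
coefficients vanish. -/
theorem ell2_trig_series_vanishing
    (L ϑ La Lb : ℝ)
    (hL : 0 < L) (hϑ : 0 < ϑ)
    (ha : 0 ≤ La) (hab : La < Lb) (hbL : Lb ≤ L)
    (ω γ : ℕ → ℝ)
    (hω : ∀ k : ℕ, ω k = ((k : ℝ) - 1/2) * π / L)
    (hγ : ∀ k : ℕ, γ k = ∫ z in La..Lb, Real.sin (ω k * z))
    (hγne : ∀ k : ℕ, 1 ≤ k → γ k ≠ 0)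
    (a b : ℕ → ℝ)
    (hl2 : Summable (fun k : ℕ => (a (k + 1))^2 + (b (k + 1))^2))
    (hsum : ∀ t : ℝ, 0 ≤ t →
      HasSum (fun k : ℕ =>
        (a (k + 1) * Real.cos (ω (k + 1) * ϑ * t)
          + b (k + 1) * Real.sin (ω (k + 1) * ϑ * t)) * γ (k + 1)) 0) :
    ∀ k : ℕ, 1 ≤ k → a k = 0 ∧ b k = 0 := by
  have hπ := Real.pi_pos
  set μ0 : ℝ := π * ϑ / (2*L) with hμ0def
  have hμ0 : 0 < μ0 := by rw [hμ0def]; positivity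
  have hTpos : 0 < 2*π/μ0 := by positivity
  have hmode : ∀ k : ℕ, ω (k+1) * ϑ = ((2*(k:ℤ)+1 : ℤ) : ℝ) * μ0 := by
    intro k
    rw [hω, hμ0def]
    push_cast
    field_simp
    ring
  have hωpos : ∀ k : ℕ, 0 < ω (k+1) := by
    intro k
    rw [hω]
    push_cast
    have h1 : (0:ℝ) < (k:ℝ) + 1 - 1/2 := by
      have := Nat.cast_nonneg (α := ℝ) k; linarith
    positivity
  -- formula and bound for γ
  have hγeq : ∀ k : ℕ, γ (k+1) =
      (Real.cos (ω (k+1) * La) - Real.cos (ω (k+1) * Lb)) / ω (k+1) := by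
    intro k
    rw [hγ, intervalIntegral.integral_comp_mul_left (f := Real.sin) (hωpos k).ne',
      integral_sin, smul_eq_mul, inv_mul_eq_div]
  have hγb : ∀ k : ℕ, |γ (k+1)| ≤ 4*L/(π*((k:ℝ)+1)) := by
    intro k
    rw [hγeq k, abs_div, abs_of_pos (hωpos k)]
    have h1 : |Real.cos (ω (k+1) * La) - Real.cos (ω (k+1) * Lb)| ≤ 2 := by
      have c1 := Real.abs_cos_le_one (ω (k+1) * La)
      have c2 := Real.abs_cos_le_one (ω (k+1) * Lb)
      calc |Real.cos (ω (k+1) * La) - Real.cos (ω (k+1) * Lb)|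
          ≤ |Real.cos (ω (k+1) * La)| + |Real.cos (ω (k+1) * Lb)| := abs_sub _ _
        _ ≤ 2 := by linarith
    have h2 : ((k:ℝ)+1) * π/(2*L) ≤ ω (k+1) := by
      rw [hω]
      push_cast
      rw [div_le_div_iff₀ (by positivity) (by positivity)]
      have hk : (0:ℝ) ≤ (k:ℝ) := Nat.cast_nonneg k
      nlinarith [mul_nonneg (mul_nonneg hk Real.pi_pos.le) hL.le]
    have hd : (0:ℝ) < ((k:ℝ)+1) * π/(2*L) := by positivity
    calc |Real.cos (ω (k+1) * La) - Real.cos (ω (k+1) * Lb)| / ω (k+1)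
        ≤ 2 / (((k:ℝ)+1) * π/(2*L)) := div_le_div₀ (by norm_num) h1 hd h2
      _ = 4*L/(π*((k:ℝ)+1)) := by field_simp; ring
  -- summable majorant
  have hMsum : Summable (fun k : ℕ => (|a (k+1)| + |b (k+1)|) * |γ (k+1)|) := by
    have hs0 : Summable (fun n : ℕ => 1/(n:ℝ)^2) :=
      Real.summable_one_div_nat_pow.mpr one_lt_two
    have hs1 : Summable (fun k : ℕ => 1/((k:ℝ)+1)^2) := by
      have := (summable_nat_add_iff 1).mpr hs0
      refine this.congr fun k => ?_
      push_cast
      ring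
    refine Summable.of_nonneg_of_le (fun k => by positivity) (fun k => ?_)
      (hl2.add (hs1.mul_left ((4*L/π)^2/2)))
    have hb := hγb k
    have e : 4*L/(π*((k:ℝ)+1)) = (4*L/π) * (1/((k:ℝ)+1)) := by
      field_simp
    have habs : (0:ℝ) ≤ |a (k+1)| + |b (k+1)| := by positivity
    have step : (|a (k+1)| + |b (k+1)|) * |γ (k+1)| ≤
        (|a (k+1)| + |b (k+1)|) * ((4*L/π) * (1/((k:ℝ)+1))) := by
      rw [← e]; exact mul_le_mul_of_nonneg_left hb habs
    refine step.trans ?_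
    have hx := sq_nonneg (|a (k+1)| + |b (k+1)| - (4*L/π) * (1/((k:ℝ)+1)))
    have hy := sq_nonneg (|a (k+1)| - |b (k+1)|)
    have sa := sq_abs (a (k+1))
    have sb := sq_abs (b (k+1))
    have e2 : (1:ℝ)/((k:ℝ)+1)^2 = (1/((k:ℝ)+1))^2 := by
      rw [div_pow, one_pow]
    rw [e2]
    nlinarith
  -- the swap lemma
  have swap : ∀ h : ℝ → ℝ, Continuous h → (∀ t, |h t| ≤ 1) →
      HasSum (fun k : ℕ => ∫ t in (0:ℝ)..(2*π/μ0),
        ((a (k+1) * Real.cos (ω (k+1) * ϑ * t)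
          + b (k+1) * Real.sin (ω (k+1) * ϑ * t)) * γ (k+1)) * h t) 0 := by
    intro h hc hb1
    set F : ℕ → ℝ → ℝ := fun k t =>
      ((a (k+1) * Real.cos (ω (k+1) * ϑ * t)
        + b (k+1) * Real.sin (ω (k+1) * ϑ * t)) * γ (k+1)) * h t with hFdef
    have hFc : ∀ k, Continuous (F k) := by
      intro k; rw [hFdef]; fun_prop
    have hFint : ∀ k, MeasureTheory.IntegrableOn (F k) (Ioc (0:ℝ) (2*π/μ0)) :=
      fun k => (hFc k).integrableOn_Ioc
    have hFb : ∀ k t, ‖F k t‖ ≤ (|a (k+1)| + |b (k+1)|) * |γ (k+1)| := by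
      intro k t
      rw [hFdef]
      simp only [Real.norm_eq_abs]
      rw [abs_mul, abs_mul]
      have h1 : |a (k+1) * Real.cos (ω (k+1) * ϑ * t)
          + b (k+1) * Real.sin (ω (k+1) * ϑ * t)| ≤ |a (k+1)| + |b (k+1)| := by
        have c1 := Real.abs_cos_le_one (ω (k+1) * ϑ * t)
        have s1 := Real.abs_sin_le_one (ω (k+1) * ϑ * t)
        have na := abs_nonneg (a (k+1))
        have nb := abs_nonneg (b (k+1))
        calc |a (k+1) * Real.cos (ω (k+1) * ϑ * t)
            + b (k+1) * Real.sin (ω (k+1) * ϑ * t)|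
            ≤ |a (k+1) * Real.cos (ω (k+1) * ϑ * t)|
              + |b (k+1) * Real.sin (ω (k+1) * ϑ * t)| := abs_add_le _ _
          _ = |a (k+1)| * |Real.cos (ω (k+1) * ϑ * t)|
              + |b (k+1)| * |Real.sin (ω (k+1) * ϑ * t)| := by rw [abs_mul, abs_mul]
          _ ≤ |a (k+1)| + |b (k+1)| := by nlinarith
      have hh := hb1 t
      calc |a (k+1) * Real.cos (ω (k+1) * ϑ * t)
            + b (k+1) * Real.sin (ω (k+1) * ϑ * t)| * |γ (k+1)| * |h t|
          ≤ |a (k+1) * Real.cos (ω (k+1) * ϑ * t)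
            + b (k+1) * Real.sin (ω (k+1) * ϑ * t)| * |γ (k+1)| :=
            mul_le_of_le_one_right (by positivity) hh
        _ ≤ (|a (k+1)| + |b (k+1)|) * |γ (k+1)| :=
            mul_le_mul_of_nonneg_right h1 (abs_nonneg _)
    have hnormint : ∀ k, ∫ t in Ioc (0:ℝ) (2*π/μ0), ‖F k t‖ ≤
        (2*π/μ0) * ((|a (k+1)| + |b (k+1)|) * |γ (k+1)|) := by
      intro k
      have hint1 : MeasureTheory.IntegrableOn (fun t => ‖F k t‖) (Ioc (0:ℝ) (2*π/μ0)) :=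
        (hFint k).norm
      have hint2 : MeasureTheory.IntegrableOn
          (fun _ : ℝ => (|a (k+1)| + |b (k+1)|) * |γ (k+1)|) (Ioc (0:ℝ) (2*π/μ0)) := by
        refine (MeasureTheory.integrableOn_const_iff (C := (|a (k+1)| + |b (k+1)|) * |γ (k+1)|)).mpr ?_
        right
        simp [Real.volume_Ioc]
      calc ∫ t in Ioc (0:ℝ) (2*π/μ0), ‖F k t‖
          ≤ ∫ _ in Ioc (0:ℝ) (2*π/μ0), (|a (k+1)| + |b (k+1)|) * |γ (k+1)| :=
            MeasureTheory.setIntegral_mono_on hint1 hint2 measurableSet_Ioc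
              (fun t _ => hFb k t)
        _ = (2*π/μ0) * ((|a (k+1)| + |b (k+1)|) * |γ (k+1)|) := by
            rw [MeasureTheory.setIntegral_const, Real.volume_real_Ioc_of_le hTpos.le, smul_eq_mul,
              sub_zero]
    have hsum2 : Summable (fun k : ℕ => ∫ t in Ioc (0:ℝ) (2*π/μ0), ‖F k t‖) := by
      refine Summable.of_nonneg_of_le
        (fun k => MeasureTheory.integral_nonneg (fun t => norm_nonneg _))
        (fun k => hnormint k) (hMsum.mul_left (2*π/μ0))
    have hkey := MeasureTheory.hasSum_integral_of_summable_integral_norm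
      (μ := MeasureTheory.volume.restrict (Ioc (0:ℝ) (2*π/μ0))) (F := F)
      (fun k => hFint k) hsum2
    have hzero : ∫ t in Ioc (0:ℝ) (2*π/μ0), (∑' k, F k t) = 0 := by
      rw [MeasureTheory.setIntegral_congr_fun (g := fun _ => (0:ℝ)) measurableSet_Ioc ?_]
      · simp
      · intro t ht
        have h0 := (hsum t ht.1.le).tsum_eq
        calc ∑' k, F k t
            = (∑' k, (a (k+1) * Real.cos (ω (k+1) * ϑ * t)
              + b (k+1) * Real.sin (ω (k+1) * ϑ * t)) * γ (k+1)) * h t := tsum_mul_right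
          _ = 0 := by rw [h0, zero_mul]
    rw [hzero] at hkey
    have hconv : ∀ k, (∫ t in (0:ℝ)..(2*π/μ0), F k t)
        = ∫ t in Ioc (0:ℝ) (2*π/μ0), F k t :=
      fun k => intervalIntegral.integral_of_le hTpos.le
    exact (funext hconv : (fun k => ∫ t in (0:ℝ)..(2*π/μ0), F k t) = _) ▸ hkey
  -- main extraction
  intro n hn
  obtain ⟨n0, rfl⟩ : ∃ n0, n = n0 + 1 := ⟨n - 1, by omega⟩
  have hπμ : π/μ0 ≠ 0 := by positivity
  have hγn : γ (n0+1) ≠ 0 := hγne (n0+1) (by omega)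
  constructor
  · -- a (n0+1) = 0
    have hA := swap (fun t => Real.cos (ω (n0+1) * ϑ * t)) (by fun_prop)
      (fun t => Real.abs_cos_le_one _)
    have modecos : ∀ k : ℕ, (∫ t in (0:ℝ)..(2*π/μ0),
        ((a (k+1) * Real.cos (ω (k+1) * ϑ * t)
          + b (k+1) * Real.sin (ω (k+1) * ϑ * t)) * γ (k+1))
          * Real.cos (ω (n0+1) * ϑ * t))
        = if k = n0 then a (n0+1) * γ (n0+1) * (π/μ0) else 0 := by
      intro k
      have key : ∀ t : ℝ, ((a (k+1) * Real.cos (ω (k+1) * ϑ * t)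
          + b (k+1) * Real.sin (ω (k+1) * ϑ * t)) * γ (k+1))
          * Real.cos (ω (n0+1) * ϑ * t)
          = (a (k+1) * γ (k+1)) * (Real.cos (((2*(k:ℤ)+1 : ℤ):ℝ) * μ0 * t)
              * Real.cos (((2*(n0:ℤ)+1 : ℤ):ℝ) * μ0 * t))
            + (b (k+1) * γ (k+1)) * (Real.sin (((2*(k:ℤ)+1 : ℤ):ℝ) * μ0 * t)
              * Real.cos (((2*(n0:ℤ)+1 : ℤ):ℝ) * μ0 * t)) := by
        intro t
        rw [hmode k, hmode n0]
        ring
      rw [intervalIntegral.integral_congr (fun t _ => key t),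
        intervalIntegral.integral_add
          (Continuous.intervalIntegrable (by fun_prop) _ _)
          (Continuous.intervalIntegrable (by fun_prop) _ _),
        intervalIntegral.integral_const_mul, intervalIntegral.integral_const_mul,
        my_orth_cc μ0 hμ0 _ _ (by omega) (by omega), my_orth_sc μ0 hμ0,
        mul_zero, add_zero]
      by_cases h : k = n0
      · subst h; rw [if_pos rfl, if_pos rfl, mul_assoc]
      · rw [if_neg (by omega), if_neg h, mul_zero]
    rw [funext modecos] at hA
    have hB := hasSum_ite_eq n0 (a (n0+1) * γ (n0+1) * (π/μ0))
    have h0 : a (n0+1) * γ (n0+1) * (π/μ0) = 0 := hB.unique hA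
    rcases mul_eq_zero.mp h0 with h1 | h1
    · rcases mul_eq_zero.mp h1 with h2 | h2
      · exact h2
      · exact absurd h2 hγn
    · exact absurd h1 hπμ
  · -- b (n0+1) = 0
    have hA := swap (fun t => Real.sin (ω (n0+1) * ϑ * t)) (by fun_prop)
      (fun t => Real.abs_sin_le_one _)
    have modesin : ∀ k : ℕ, (∫ t in (0:ℝ)..(2*π/μ0),
        ((a (k+1) * Real.cos (ω (k+1) * ϑ * t)
          + b (k+1) * Real.sin (ω (k+1) * ϑ * t)) * γ (k+1))
          * Real.sin (ω (n0+1) * ϑ * t))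
        = if k = n0 then b (n0+1) * γ (n0+1) * (π/μ0) else 0 := by
      intro k
      have key : ∀ t : ℝ, ((a (k+1) * Real.cos (ω (k+1) * ϑ * t)
          + b (k+1) * Real.sin (ω (k+1) * ϑ * t)) * γ (k+1))
          * Real.sin (ω (n0+1) * ϑ * t)
          = (a (k+1) * γ (k+1)) * (Real.sin (((2*(n0:ℤ)+1 : ℤ):ℝ) * μ0 * t)
              * Real.cos (((2*(k:ℤ)+1 : ℤ):ℝ) * μ0 * t))
            + (b (k+1) * γ (k+1)) * (Real.sin (((2*(k:ℤ)+1 : ℤ):ℝ) * μ0 * t)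
              * Real.sin (((2*(n0:ℤ)+1 : ℤ):ℝ) * μ0 * t)) := by
        intro t
        rw [hmode k, hmode n0]
        ring
      rw [intervalIntegral.integral_congr (fun t _ => key t),
        intervalIntegral.integral_add
          (Continuous.intervalIntegrable (by fun_prop) _ _)
          (Continuous.intervalIntegrable (by fun_prop) _ _),
        intervalIntegral.integral_const_mul, intervalIntegral.integral_const_mul,
        my_orth_ss μ0 hμ0 _ _ (by omega) (by omega), my_orth_sc μ0 hμ0,
        mul_zero, zero_add]
      by_cases h : k = n0
      · subst h; rw [if_pos rfl, if_pos rfl, mul_assoc]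
      · rw [if_neg (by omega), if_neg h, mul_zero]
    rw [funext modesin] at hA
    have hB := hasSum_ite_eq n0 (b (n0+1) * γ (n0+1) * (π/μ0))
    have h0 : b (n0+1) * γ (n0+1) * (π/μ0) = 0 := hB.unique hA
    rcases mul_eq_zero.mp h0 with h1 | h1
    · rcases mul_eq_zero.mp h1 with h2 | h2
      · exact h2
      · exact absurd h2 hγn
    · exact absurd h1 hπμ
end

section
/- Only the trivial solution lies in the invariant set S under the actuator-length condition: Let L > 0, ϑ > 0 and 0 ≤ L_{p1} < L_{p2} ≤ L, and assume that for all positive integers k and j one has L_{p2} − L_{p1} ≠ 4·L·j/(2k − 1) and L_{p2} + L_{p1} ≠ 4·L·j/(2k − 1). For positive integers k set ω_k = (k − 1/2)·π/L and γ_k = ∫_{L_{p1}}^{L_{p2}} sin(ω_k·z) dz. Let (a_k)_{k≥1} and (b_k)_{k≥1} be real sequences with Σ_{k=1}^∞ (a_k² + b_k²) < ∞. If for every t ≥ 0 the family ( (a_k·cos(ω_k·ϑ·t) + b_k·sin(ω_k·ϑ·t))·γ_k )_{k≥1} is summable with sum equal to 0, then a_k = 0 and b_k = 0 for every k ≥ 1;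 that is, the only solution of the free wave equation in the set S = {χ : dH̃/dt = 0} is the trivial one. -/
open Real Set intervalIntegral

open MeasureTheory Filter Topology


lemma aux_int_sin (θ : ℝ) (hθ : 0 < θ) (n : ℤ) :
    ∫ t in (0:ℝ)..(2*π/θ), Real.sin ((n:ℝ)*θ*t) = 0 := by
  rcases eq_or_ne n 0 with rfl | hn
  · simp
  have hc : (n:ℝ)*θ ≠ 0 := mul_ne_zero (Int.cast_ne_zero.2 hn) hθ.ne'
  rw [intervalIntegral.integral_comp_mul_left (fun x => Real.sin x) hc,
    integral_sin]
  rw [show (n:ℝ)*θ*(2*π/θ) = (n:ℝ)*(2*π) by field_simp]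
  rw [Real.cos_int_mul_two_pi]
  simp

lemma aux_int_cos (θ : ℝ) (hθ : 0 < θ) (n : ℤ) (hn : n ≠ 0) :
    ∫ t in (0:ℝ)..(2*π/θ), Real.cos ((n:ℝ)*θ*t) = 0 := by
  have hc : (n:ℝ)*θ ≠ 0 := mul_ne_zero (Int.cast_ne_zero.2 hn) hθ.ne'
  rw [intervalIntegral.integral_comp_mul_left (fun x => Real.cos x) hc,
    integral_cos]
  rw [show (n:ℝ)*θ*(2*π/θ) = (2*n:ℤ)*π by push_cast; field_simp]
  rw [Real.sin_int_mul_pi]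
  simp

lemma aux_int_one (θ : ℝ) (hθ : 0 < θ) :
    ∫ t in (0:ℝ)..(2*π/θ), (1:ℝ) = 2*π/θ := by simp

lemma aux_cc (θ : ℝ) (hθ : 0 < θ) (p q : ℤ) (hp : 0 < p) (hq : 0 < q) :
    ∫ t in (0:ℝ)..(2*π/θ), Real.cos ((p:ℝ)*θ*t) * Real.cos ((q:ℝ)*θ*t)
      = if p = q then (2*π/θ)/2 else 0 := by
  have hid : ∀ t : ℝ, Real.cos ((p:ℝ)*θ*t) * Real.cos ((q:ℝ)*θ*t)
      = (Real.cos (((p-q:ℤ):ℝ)*θ*t) + Real.cos (((p+q:ℤ):ℝ)*θ*t))/2 := by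
    intro t
    push_cast
    rw [show ((p:ℝ)-q)*θ*t = (p:ℝ)*θ*t - (q:ℝ)*θ*t by ring,
        show ((p:ℝ)+q)*θ*t = (p:ℝ)*θ*t + (q:ℝ)*θ*t by ring,
        Real.cos_sub, Real.cos_add]
    ring
  simp only [hid]
  have h1 : IntervalIntegrable (fun t => Real.cos (((p-q:ℤ):ℝ)*θ*t)) MeasureTheory.volume 0 (2*π/θ) :=
    (Real.continuous_cos.comp (by continuity)).intervalIntegrable _ _
  have h2 : IntervalIntegrable (fun t => Real.cos (((p+q:ℤ):ℝ)*θ*t)) MeasureTheory.volume 0 (2*π/θ) :=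
    (Real.continuous_cos.comp (by continuity)).intervalIntegrable _ _
  rw [intervalIntegral.integral_div, intervalIntegral.integral_add h1 h2,
    aux_int_cos θ hθ (p+q) (by omega)]
  rcases eq_or_ne p q with rfl | hpq
  · simp
  · rw [aux_int_cos θ hθ (p-q) (by omega)]
    simp [hpq]

lemma aux_ss (θ : ℝ) (hθ : 0 < θ) (p q : ℤ) (hp : 0 < p) (hq : 0 < q) :
    ∫ t in (0:ℝ)..(2*π/θ), Real.sin ((p:ℝ)*θ*t) * Real.sin ((q:ℝ)*θ*t)
      = if p = q then (2*π/θ)/2 else 0 := by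
  have hid : ∀ t : ℝ, Real.sin ((p:ℝ)*θ*t) * Real.sin ((q:ℝ)*θ*t)
      = (Real.cos (((p-q:ℤ):ℝ)*θ*t) - Real.cos (((p+q:ℤ):ℝ)*θ*t))/2 := by
    intro t
    push_cast
    rw [show ((p:ℝ)-q)*θ*t = (p:ℝ)*θ*t - (q:ℝ)*θ*t by ring,
        show ((p:ℝ)+q)*θ*t = (p:ℝ)*θ*t + (q:ℝ)*θ*t by ring,
        Real.cos_sub, Real.cos_add]
    ring
  simp only [hid]
  have h1 : IntervalIntegrable (fun t => Real.cos (((p-q:ℤ):ℝ)*θ*t)) MeasureTheory.volume 0 (2*π/θ) :=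
    (Real.continuous_cos.comp (by continuity)).intervalIntegrable _ _
  have h2 : IntervalIntegrable (fun t => Real.cos (((p+q:ℤ):ℝ)*θ*t)) MeasureTheory.volume 0 (2*π/θ) :=
    (Real.continuous_cos.comp (by continuity)).intervalIntegrable _ _
  rw [intervalIntegral.integral_div, intervalIntegral.integral_sub h1 h2,
    aux_int_cos θ hθ (p+q) (by omega)]
  rcases eq_or_ne p q with rfl | hpq
  · simp
  · rw [aux_int_cos θ hθ (p-q) (by omega)]
    simp [hpq]

lemma aux_sc (θ : ℝ) (hθ : 0 < θ) (p q : ℤ) :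
    ∫ t in (0:ℝ)..(2*π/θ), Real.sin ((p:ℝ)*θ*t) * Real.cos ((q:ℝ)*θ*t) = 0 := by
  have hid : ∀ t : ℝ, Real.sin ((p:ℝ)*θ*t) * Real.cos ((q:ℝ)*θ*t)
      = (Real.sin (((p+q:ℤ):ℝ)*θ*t) + Real.sin (((p-q:ℤ):ℝ)*θ*t))/2 := by
    intro t
    push_cast
    rw [show ((p:ℝ)-q)*θ*t = (p:ℝ)*θ*t - (q:ℝ)*θ*t by ring,
        show ((p:ℝ)+q)*θ*t = (p:ℝ)*θ*t + (q:ℝ)*θ*t by ring,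
        Real.sin_sub, Real.sin_add]
    ring
  simp only [hid]
  have h1 : IntervalIntegrable (fun t => Real.sin (((p+q:ℤ):ℝ)*θ*t)) MeasureTheory.volume 0 (2*π/θ) :=
    (Real.continuous_sin.comp (by continuity)).intervalIntegrable _ _
  have h2 : IntervalIntegrable (fun t => Real.sin (((p-q:ℤ):ℝ)*θ*t)) MeasureTheory.volume 0 (2*π/θ) :=
    (Real.continuous_sin.comp (by continuity)).intervalIntegrable _ _
  rw [intervalIntegral.integral_div, intervalIntegral.integral_add h1 h2,
    aux_int_sin θ hθ (p+q), aux_int_sin θ hθ (p-q)]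
  simp





lemma aux_uu (θ : ℝ) (hθ : 0 < θ) (p q : ℤ) (hp : 0 < p) (hq : 0 < q) (A B C D : ℝ) :
    (∫ t in (0:ℝ)..(2*π/θ),
      (A * Real.cos ((p:ℝ)*θ*t) + B * Real.sin ((p:ℝ)*θ*t)) *
      (C * Real.cos ((q:ℝ)*θ*t) + D * Real.sin ((q:ℝ)*θ*t)))
    = if p = q then (2*π/θ)/2 * (A*C + B*D) else 0 := by
  have c1 : Continuous (fun t : ℝ => Real.cos ((p:ℝ)*θ*t) * Real.cos ((q:ℝ)*θ*t)) := by
    fun_prop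
  have c2 : Continuous (fun t : ℝ => Real.sin ((p:ℝ)*θ*t) * Real.sin ((q:ℝ)*θ*t)) := by
    fun_prop
  have c3 : Continuous (fun t : ℝ => Real.sin ((p:ℝ)*θ*t) * Real.cos ((q:ℝ)*θ*t)) := by
    fun_prop
  have c4 : Continuous (fun t : ℝ => Real.sin ((q:ℝ)*θ*t) * Real.cos ((p:ℝ)*θ*t)) := by
    fun_prop
  have h1 : IntervalIntegrable (fun t : ℝ => A*C*(Real.cos ((p:ℝ)*θ*t) * Real.cos ((q:ℝ)*θ*t)))
      volume 0 (2*π/θ) := (continuous_const.mul c1).intervalIntegrable _ _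
  have h2 : IntervalIntegrable (fun t : ℝ => B*D*(Real.sin ((p:ℝ)*θ*t) * Real.sin ((q:ℝ)*θ*t)))
      volume 0 (2*π/θ) := (continuous_const.mul c2).intervalIntegrable _ _
  have h3 : IntervalIntegrable (fun t : ℝ => B*C*(Real.sin ((p:ℝ)*θ*t) * Real.cos ((q:ℝ)*θ*t)))
      volume 0 (2*π/θ) := (continuous_const.mul c3).intervalIntegrable _ _
  have h4 : IntervalIntegrable (fun t : ℝ => A*D*(Real.sin ((q:ℝ)*θ*t) * Real.cos ((p:ℝ)*θ*t)))
      volume 0 (2*π/θ) := (continuous_const.mul c4).intervalIntegrable _ _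
  calc (∫ t in (0:ℝ)..(2*π/θ),
      (A * Real.cos ((p:ℝ)*θ*t) + B * Real.sin ((p:ℝ)*θ*t)) *
      (C * Real.cos ((q:ℝ)*θ*t) + D * Real.sin ((q:ℝ)*θ*t)))
      = ∫ t in (0:ℝ)..(2*π/θ),
        (A*C*(Real.cos ((p:ℝ)*θ*t) * Real.cos ((q:ℝ)*θ*t))
          + B*D*(Real.sin ((p:ℝ)*θ*t) * Real.sin ((q:ℝ)*θ*t))
          + B*C*(Real.sin ((p:ℝ)*θ*t) * Real.cos ((q:ℝ)*θ*t))
          + A*D*(Real.sin ((q:ℝ)*θ*t) * Real.cos ((p:ℝ)*θ*t))) := by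
        apply intervalIntegral.integral_congr
        intro t _
        ring
    _ = if p = q then (2*π/θ)/2 * (A*C + B*D) else 0 := by
        rw [intervalIntegral.integral_add ((h1.add h2).add h3) h4,
            intervalIntegral.integral_add (h1.add h2) h3,
            intervalIntegral.integral_add h1 h2,
            intervalIntegral.integral_const_mul, intervalIntegral.integral_const_mul,
            intervalIntegral.integral_const_mul, intervalIntegral.integral_const_mul,
            aux_cc θ hθ p q hp hq, aux_ss θ hθ p q hp hq,
            aux_sc θ hθ p q, aux_sc θ hθ q p]
        split_ifs with h
        · ring
        · ring


lemma key_limit (P : ℝ) (hP : 0 < P) (u : ℕ → ℝ → ℝ) (hu : ∀ k, Continuous (u k))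
    (hconv : ∀ t ∈ Set.Ioc (0:ℝ) P,
      Tendsto (fun N => ∑ k ∈ Finset.range N, u k t) atTop (𝓝 0))
    (C : ℝ)
    (hC : ∀ N, ∫ t in (0:ℝ)..P, (∑ k ∈ Finset.range N, u k t)^2 ≤ C)
    (v : ℝ → ℝ) (hv : Continuous v) (hv1 : ∀ t, |v t| ≤ 1) :
    Tendsto (fun N => ∫ t in (0:ℝ)..P, (∑ k ∈ Finset.range N, u k t) * v t)
      atTop (𝓝 0) := by
  set μ0 : Measure ℝ := volume.restrict (Set.Ioc 0 P) with hμ0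
  set S : ℕ → ℝ → ℝ := fun N t => ∑ k ∈ Finset.range N, u k t with hS
  have hScont : ∀ N, Continuous (S N) := fun N => by
    exact continuous_finset_sum _ fun k _ => hu k
  have hμ0univ : μ0 Set.univ = ENNReal.ofReal P := by
    rw [hμ0, Measure.restrict_apply_univ, Real.volume_Ioc, sub_zero]
  haveI : IsFiniteMeasure μ0 := ⟨by rw [hμ0univ]; exact ENNReal.ofReal_lt_top⟩
  have hCnn : 0 ≤ C := by
    have := hC 0
    simpa using this
  -- convert interval integral to μ0 integral
  have hconv_int : ∀ (f : ℝ → ℝ), (∫ t in (0:ℝ)..P, f t) = ∫ t, f t ∂μ0 := fun f => by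
    rw [intervalIntegral.integral_of_le hP.le]
  have hIntSv : ∀ N, Integrable (fun t => S N t * v t) μ0 :=
    fun N => ((hScont N).mul hv).integrableOn_Ioc
  have hIntS2 : ∀ N, Integrable (fun t => (S N t)^2) μ0 :=
    fun N => ((hScont N).pow 2).integrableOn_Ioc
  rw [Metric.tendsto_atTop]
  intro ε hε
  set η : ℝ := ε/(4*(C+1)) with hηdef
  have hηpos : 0 < η := by positivity
  set δ : ℝ := η*ε/2 with hδdef
  have hδpos : 0 < δ := by positivity
  set ε₁ : ℝ := ε/(4*(P+1)) with hε₁def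
  have hε₁pos : 0 < ε₁ := by positivity
  -- Egorov
  have hae : ∀ᵐ x ∂μ0, Tendsto (fun N => S N x) atTop (𝓝 ((0 : ℝ → ℝ) x)) := by
    have h' : ∀ᵐ x ∂μ0, x ∈ Set.Ioc (0:ℝ) P :=
      ae_restrict_mem measurableSet_Ioc
    filter_upwards [h'] with x hx
    exact hconv x hx
  obtain ⟨E, hEm, hEμ, hunif⟩ := tendstoUniformlyOn_of_ae_tendsto'
    (μ := μ0) (f := S) (g := 0)
    (fun N => (hScont N).stronglyMeasurable) stronglyMeasurable_const hae hδpos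
  rw [Metric.tendstoUniformlyOn_iff] at hunif
  obtain ⟨N₀, hN₀⟩ := eventually_atTop.mp (hunif ε₁ hε₁pos)
  refine ⟨N₀, fun N hN => ?_⟩
  have hbound : ∀ x ∈ Eᶜ, ‖S N x * v x‖ ≤ ε₁ := by
    intro x hx
    have h1 := hN₀ N hN x hx
    simp only [Pi.zero_apply, dist_zero_left] at h1
    rw [norm_mul]
    calc ‖S N x‖ * ‖v x‖ ≤ ‖S N x‖ * 1 :=
          mul_le_mul_of_nonneg_left (hv1 x) (norm_nonneg _)
      _ = ‖S N x‖ := mul_one _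
      _ ≤ ε₁ := by rw [Real.norm_eq_abs] at h1 ⊢; linarith
  -- split integral
  have hsplit : (∫ t, S N t * v t ∂μ0)
      = (∫ t in E, S N t * v t ∂μ0) + ∫ t in Eᶜ, S N t * v t ∂μ0 :=
    (integral_add_compl hEm (hIntSv N)).symm
  -- bound on Eᶜ
  have hA : ‖∫ t in Eᶜ, S N t * v t ∂μ0‖ ≤ ε₁ * P := by
    have h1 : ‖∫ t in Eᶜ, S N t * v t ∂μ0‖ ≤ ε₁ * (μ0 Eᶜ).toReal :=
      MeasureTheory.norm_setIntegral_le_of_norm_le_const (lt_of_le_of_lt (measure_mono (Set.subset_univ _)) (by rw [hμ0univ]; exact ENNReal.ofReal_lt_top)) hbound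
    refine h1.trans (mul_le_mul_of_nonneg_left ?_ hε₁pos.le)
    calc (μ0 Eᶜ).toReal ≤ (μ0 Set.univ).toReal :=
          ENNReal.toReal_mono (by rw [hμ0univ]; exact ENNReal.ofReal_ne_top)
            (measure_mono (Set.subset_univ _))
      _ ≤ P := le_of_eq (by rw [hμ0univ, ENNReal.toReal_ofReal hP.le])
  -- bound on E
  have hEδ : (μ0 E).toReal ≤ δ := by
    refine ENNReal.toReal_le_of_le_ofReal hδpos.le hEμ
  have hB : ‖∫ t in E, S N t * v t ∂μ0‖ ≤ η/2 * C + δ/(2*η) := by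
    have hptwise : ∀ x ∈ E, |S N x * v x| ≤ η/2 * (S N x)^2 + 1/(2*η) := by
      intro x _
      have h1 : |S N x * v x| ≤ |S N x| := by
        rw [abs_mul]
        exact mul_le_of_le_one_right (abs_nonneg _) (hv1 x)
      have h2 : |S N x| ≤ η/2 * (S N x)^2 + 1/(2*η) := by
        have key : 2*η*|S N x| ≤ η^2*(S N x)^2 + 1 := by
          nlinarith [sq_nonneg (η*|S N x| - 1), sq_abs (S N x)]
        calc |S N x| = (2*η*|S N x|)/(2*η) := by field_simp
          _ ≤ (η^2*(S N x)^2 + 1)/(2*η) := by gcongr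
          _ = η/2 * (S N x)^2 + 1/(2*η) := by field_simp
      linarith
    have hIa : IntegrableOn (fun x => |S N x * v x|) E μ0 :=
      ((hIntSv N).abs).integrableOn
    have hIb : IntegrableOn (fun x => η/2 * (S N x)^2 + 1/(2*η)) E μ0 :=
      (((hIntS2 N).const_mul _).add (integrable_const _)).integrableOn
    calc ‖∫ t in E, S N t * v t ∂μ0‖
        ≤ ∫ t in E, |S N t * v t| ∂μ0 := by
          simpa [Real.norm_eq_abs, abs_mul] using
            MeasureTheory.norm_integral_le_integral_norm (μ := μ0.restrict E) (fun t => S N t * v t)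
      _ ≤ ∫ t in E, (η/2 * (S N t)^2 + 1/(2*η)) ∂μ0 :=
          setIntegral_mono_on hIa hIb hEm hptwise
      _ = η/2 * (∫ t in E, (S N t)^2 ∂μ0) + (1/(2*η)) * (μ0 E).toReal := by
          rw [MeasureTheory.integral_add ((hIntS2 N).const_mul _).integrableOn
              (integrable_const _).integrableOn,
            MeasureTheory.integral_const_mul, setIntegral_const]
          simp [smul_eq_mul, mul_comm, Measure.real]
      _ ≤ η/2 * C + δ/(2*η) := by
          have h3 : (∫ t in E, (S N t)^2 ∂μ0) ≤ ∫ t, (S N t)^2 ∂μ0 :=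
            setIntegral_le_integral (hIntS2 N) (Eventually.of_forall fun x => sq_nonneg _)
          have h4 : (∫ t, (S N t)^2 ∂μ0) ≤ C := by
            rw [← hconv_int]; exact hC N
          have h5 : (1/(2*η)) * (μ0 E).toReal ≤ δ/(2*η) := by
            rw [div_eq_mul_one_div δ, mul_comm δ]
            exact mul_le_mul_of_nonneg_left hEδ (by positivity)
          have := mul_le_mul_of_nonneg_left (h3.trans h4) (by positivity : (0:ℝ) ≤ η/2)
          linarith
  -- combine
  rw [Real.dist_eq, sub_zero, hconv_int, hsplit]
  have hfin : η/2*C + δ/(2*η) + ε₁ * P < ε := by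
    have e1 : δ/(2*η) = ε/4 := by
      rw [hδdef, div_eq_div_iff (by positivity) (by norm_num : (4:ℝ) ≠ 0)]; ring
    have e2 : η/2*C ≤ ε/4 := by
      have h' : η * (C+1) = ε/4 := by
        rw [hηdef]; field_simp
      nlinarith [mul_nonneg hηpos.le hCnn]
    have e3 : ε₁ * P < ε/4 := by
      have h' : ε₁ * (P+1) = ε/4 := by
        rw [hε₁def]; field_simp
      nlinarith
    linarith
  calc |(∫ t in E, S N t * v t ∂μ0) + ∫ t in Eᶜ, S N t * v t ∂μ0|
      ≤ |∫ t in E, S N t * v t ∂μ0| + |∫ t in Eᶜ, S N t * v t ∂μ0| := abs_add_le _ _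
    _ ≤ (η/2 * C + δ/(2*η)) + ε₁ * P := add_le_add hB hA
    _ < ε := by linarith


lemma gamma_ne_zero (L Lp1 Lp2 : ℝ) (hL : 0 < L)
    (hp1 : 0 ≤ Lp1) (hp12 : Lp1 < Lp2)
    (hlen : ∀ k j : ℕ, 1 ≤ k → 1 ≤ j →
      Lp2 - Lp1 ≠ 4 * L * (j : ℝ) / (2 * (k : ℝ) - 1)
      ∧ Lp2 + Lp1 ≠ 4 * L * (j : ℝ) / (2 * (k : ℝ) - 1))
    (ω : ℕ → ℝ) (hω : ∀ k : ℕ, ω k = ((k : ℝ) - 1/2) * π / L)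
    (k : ℕ) (hk : 1 ≤ k) :
    (∫ z in Lp1..Lp2, Real.sin (ω k * z)) ≠ 0 := by
  have hk1 : (1:ℝ) ≤ (k:ℝ) := by exact_mod_cast hk
  have hωpos : 0 < ω k := by
    rw [hω]
    have : (0:ℝ) < (k:ℝ) - 1/2 := by linarith
    positivity
  have h2k : (2*(k:ℝ) - 1) ≠ 0 := by nlinarith
  -- compute the integral
  have hval : (∫ z in Lp1..Lp2, Real.sin (ω k * z))
      = (Real.cos (ω k * Lp1) - Real.cos (ω k * Lp2)) / ω k := by
    rw [intervalIntegral.integral_comp_mul_left (fun x => Real.sin x) hωpos.ne',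
      integral_sin]
    rw [smul_eq_mul]
    field_simp
  rw [hval]
  rw [div_ne_zero_iff]
  refine ⟨?_, hωpos.ne'⟩
  rw [sub_ne_zero]
  intro heq
  have h0 : Real.cos (ω k * Lp1) - Real.cos (ω k * Lp2) = 0 := by rw [heq]; ring
  rw [Real.cos_sub_cos] at h0
  have h0' : Real.sin ((ω k * Lp1 + ω k * Lp2)/2) = 0
      ∨ Real.sin ((ω k * Lp1 - ω k * Lp2)/2) = 0 := by
    rcases mul_eq_zero.mp h0 with h | h
    · rcases mul_eq_zero.mp h with h2 | h2
      · norm_num at h2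
      · exact Or.inl h2
    · exact Or.inr h
  rcases h0' with h | h
  · -- plus case
    obtain ⟨n, hn⟩ := Real.sin_eq_zero_iff.mp h
    have hs : ω k * (Lp1 + Lp2) / 2 = (n:ℝ) * π := by rw [hn]; ring
    have hpos : 0 < ω k * (Lp1 + Lp2) / 2 := by
      have : 0 < Lp1 + Lp2 := by linarith
      positivity
    have hnpos : 0 < n := by
      by_contra hc
      push_neg at hc
      have : (n:ℝ) ≤ 0 := by exact_mod_cast hc
      nlinarith [Real.pi_pos]
    have hj : 1 ≤ n.toNat := by omega
    have hcast : ((n.toNat : ℕ) : ℝ) = (n:ℝ) := by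
      have h' : (n.toNat : ℤ) = n := Int.toNat_of_nonneg hnpos.le
      exact_mod_cast h'
    have := (hlen k n.toNat hk hj).2
    apply this
    -- Lp2 + Lp1 = 4*L*n/(2k-1)
    rw [eq_div_iff h2k]
    have hω' : ω k = (2*(k:ℝ)-1) * π / (2*L) := by
      rw [hω, div_eq_div_iff hL.ne' (by positivity : (2*L:ℝ) ≠ 0)]; ring
    rw [hω'] at hs
    have hfs : (2*(k:ℝ)-1) * π * (Lp1 + Lp2) = (n:ℝ) * π * (4*L) := by
      field_simp at hs
      linear_combination π * hs
    have : π * ((Lp2 + Lp1) * (2*(k:ℝ)-1)) = π * (4*L*((n.toNat : ℕ):ℝ)) := by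
      rw [hcast]; linear_combination hfs
    exact mul_left_cancel₀ Real.pi_ne_zero this
  · -- minus case
    obtain ⟨n, hn⟩ := Real.sin_eq_zero_iff.mp h
    have hs : ω k * (Lp1 - Lp2) / 2 = (n:ℝ) * π := by rw [hn]; ring
    have hneg : ω k * (Lp1 - Lp2) / 2 < 0 := by
      have : Lp1 - Lp2 < 0 := by linarith
      have h2 : ω k * (Lp1 - Lp2) < 0 := mul_neg_of_pos_of_neg hωpos this
      linarith
    have hnneg : n < 0 := by
      by_contra hc
      push_neg at hc
      have : (0:ℝ) ≤ (n:ℝ) := by exact_mod_cast hc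
      nlinarith [Real.pi_pos]
    set m : ℤ := -n with hm
    have hj : 1 ≤ m.toNat := by omega
    have hcast : ((m.toNat : ℕ) : ℝ) = -(n:ℝ) := by
      have h' : (m.toNat : ℤ) = -n := by omega
      exact_mod_cast h'
    have := (hlen k m.toNat hk hj).1
    apply this
    rw [eq_div_iff h2k]
    have hω' : ω k = (2*(k:ℝ)-1) * π / (2*L) := by
      rw [hω, div_eq_div_iff hL.ne' (by positivity : (2*L:ℝ) ≠ 0)]; ring
    rw [hω'] at hs
    have hfs : (2*(k:ℝ)-1) * π * (Lp1 - Lp2) = (n:ℝ) * π * (4*L) := by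
      field_simp at hs
      linear_combination π * hs
    have : π * ((Lp2 - Lp1) * (2*(k:ℝ)-1)) = π * (4*L*((m.toNat : ℕ):ℝ)) := by
      rw [hcast]; linear_combination -hfs
    exact mul_left_cancel₀ Real.pi_ne_zero this


lemma sq_sum_integral (P : ℝ) (u : ℕ → ℝ → ℝ) (hu : ∀ k, Continuous (u k)) (w : ℕ → ℝ)
    (hUU : ∀ k j : ℕ, (∫ t in (0:ℝ)..P, u k t * u j t) = if k = j then w k else 0)
    (N : ℕ) :
    (∫ t in (0:ℝ)..P, (∑ k ∈ Finset.range N, u k t)^2)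
      = ∑ k ∈ Finset.range N, w k := by
  have hint : ∀ k j : ℕ, IntervalIntegrable (fun t => u k t * u j t) volume 0 P :=
    fun k j => ((hu k).mul (hu j)).intervalIntegrable _ _
  calc (∫ t in (0:ℝ)..P, (∑ k ∈ Finset.range N, u k t)^2)
      = ∫ t in (0:ℝ)..P, ∑ k ∈ Finset.range N, ∑ j ∈ Finset.range N,
          u k t * u j t :=
        intervalIntegral.integral_congr
          (fun t _ => by simp only [sq, Finset.sum_mul_sum])
    _ = ∑ k ∈ Finset.range N, ∫ t in (0:ℝ)..P, ∑ j ∈ Finset.range N,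
          u k t * u j t :=
        intervalIntegral.integral_finset_sum
          (f := fun k t => ∑ j ∈ Finset.range N, u k t * u j t)
          (fun k _ => by
            have h := IntervalIntegrable.sum (μ := volume) (a := (0:ℝ)) (b := P)
              (Finset.range N) (f := fun j t => u k t * u j t)
              (fun j _ => hint k j)
            have heq : (∑ j ∈ Finset.range N, fun t => u k t * u j t)
                = fun t => ∑ j ∈ Finset.range N, u k t * u j t := by
              funext t
              simp
            rw [heq] at h
            exact h)
    _ = ∑ k ∈ Finset.range N, ∑ j ∈ Finset.range N,
          ∫ t in (0:ℝ)..P, u k t * u j t :=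
        Finset.sum_congr rfl fun k _ =>
          intervalIntegral.integral_finset_sum (fun j _ => hint k j)
    _ = ∑ k ∈ Finset.range N, w k := by
        refine Finset.sum_congr rfl fun k hk => ?_
        calc (∑ j ∈ Finset.range N, ∫ t in (0:ℝ)..P, u k t * u j t)
            = ∑ j ∈ Finset.range N, if k = j then w k else 0 :=
              Finset.sum_congr rfl fun j _ => hUU k j
          _ = w k := by
              rw [Finset.sum_ite_eq (Finset.range N) k (fun _ => w k), if_pos hk]

set_option maxHeartbeats 1000000 in
/-- Only the trivial solution lies in the invariant set `S` under the
actuator-length condition: if `Lp2 − Lp1 ≠ 4Lj/(2k−1)` and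
`Lp2 + Lp1 ≠ 4Lj/(2k−1)` for all positive integers `k, j`, and the modal
superposition `Σ_{k≥1} (a_k cos(ω_k ϑ t) + b_k sin(ω_k ϑ t)) γ_k`, with
`γ_k = ∫_{Lp1}^{Lp2} sin(ω_k z) dz` and ℓ² coefficients, vanishes for all
`t ≥ 0`, then all coefficients vanish. -/
theorem invariant_set_only_trivial_solution
    (L ϑ Lp1 Lp2 : ℝ)
    (hL : 0 < L) (hϑ : 0 < ϑ)
    (hp1 : 0 ≤ Lp1) (hp12 : Lp1 < Lp2) (hp2 : Lp2 ≤ L)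
    (hlen : ∀ k j : ℕ, 1 ≤ k → 1 ≤ j →
      Lp2 - Lp1 ≠ 4 * L * (j : ℝ) / (2 * (k : ℝ) - 1)
      ∧ Lp2 + Lp1 ≠ 4 * L * (j : ℝ) / (2 * (k : ℝ) - 1))
    (ω γ : ℕ → ℝ)
    (hω : ∀ k : ℕ, ω k = ((k : ℝ) - 1/2) * π / L)
    (hγ : ∀ k : ℕ, γ k = ∫ z in Lp1..Lp2, Real.sin (ω k * z))
    (a b : ℕ → ℝ)
    (hl2 : Summable (fun k : ℕ => (a (k + 1))^2 + (b (k + 1))^2))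
    (hsum : ∀ t : ℝ, 0 ≤ t →
      HasSum (fun k : ℕ =>
        (a (k + 1) * Real.cos (ω (k + 1) * ϑ * t)
          + b (k + 1) * Real.sin (ω (k + 1) * ϑ * t)) * γ (k + 1)) 0) :
    ∀ k : ℕ, 1 ≤ k → a k = 0 ∧ b k = 0 := by
  have hγne : ∀ k : ℕ, 1 ≤ k → γ k ≠ 0 := fun k hk => by
    rw [hγ]; exact gamma_ne_zero L Lp1 Lp2 hL hp1 hp12 hlen ω hω k hk
  set θ : ℝ := π * ϑ / (2*L) with hθdef
  have hθpos : 0 < θ := by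
    rw [hθdef]; positivity
  set P : ℝ := 2*π/θ with hPdef
  have hPpos : 0 < P := by rw [hPdef]; positivity
  set c : ℕ → ℝ := fun k => a (k+1) * γ (k+1) with hc
  set d : ℕ → ℝ := fun k => b (k+1) * γ (k+1) with hd
  set u : ℕ → ℝ → ℝ := fun k t =>
    c k * Real.cos (((2*(k:ℤ)+1 : ℤ):ℝ)*θ*t) + d k * Real.sin (((2*(k:ℤ)+1 : ℤ):ℝ)*θ*t)
    with hudef
  have hfreq : ∀ (k : ℕ) (t : ℝ), ω (k+1) * ϑ * t = ((2*(k:ℤ)+1 : ℤ):ℝ)*θ*t := by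
    intro k t
    have hcoef : ω (k+1) * ϑ = ((2*(k:ℤ)+1 : ℤ):ℝ)*θ := by
      rw [hω, hθdef]
      push_cast
      field_simp
      ring
    rw [hcoef]
  have hsum' : ∀ t : ℝ, 0 ≤ t → HasSum (fun k => u k t) 0 := by
    intro t ht
    have h := hsum t ht
    have heq : (fun k : ℕ =>
        (a (k + 1) * Real.cos (ω (k + 1) * ϑ * t)
          + b (k + 1) * Real.sin (ω (k + 1) * ϑ * t)) * γ (k + 1))
        = fun k => u k t := by
      funext k
      rw [hfreq, hudef, hc, hd]
      ring
    rwa [heq] at h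
  have hucont : ∀ k, Continuous (u k) := by
    intro k
    rw [hudef]
    exact (continuous_const.mul (Real.continuous_cos.comp
        (continuous_const.mul continuous_id))).add
      (continuous_const.mul (Real.continuous_sin.comp
        (continuous_const.mul continuous_id)))
  -- orthogonality
  have hUU : ∀ k j : ℕ, (∫ t in (0:ℝ)..P, u k t * u j t)
      = if k = j then P/2 * ((c k)^2 + (d k)^2) else 0 := by
    intro k j
    have h := aux_uu θ hθpos (2*(k:ℤ)+1) (2*(j:ℤ)+1) (by omega) (by omega)
      (c k) (d k) (c j) (d j)
    rw [← hPdef] at h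
    rw [hudef]
    rw [h]
    by_cases hkj : k = j
    · subst hkj
      rw [if_pos rfl, if_pos rfl]
      ring
    · rw [if_neg (by omega : ¬ (2*(k:ℤ)+1 = 2*(j:ℤ)+1)), if_neg hkj]
  -- value of the tested integrals
  have hScos : ∀ (m N : ℕ), m < N →
      (∫ t in (0:ℝ)..P, (∑ k ∈ Finset.range N, u k t)
        * Real.cos (((2*(m:ℤ)+1 : ℤ):ℝ)*θ*t)) = P/2 * c m := by
    intro m N hmN
    have hint : ∀ k : ℕ, IntervalIntegrable
        (fun t => u k t * Real.cos (((2*(m:ℤ)+1 : ℤ):ℝ)*θ*t)) volume 0 P :=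
      fun k => ((hucont k).mul (Real.continuous_cos.comp
        (continuous_const.mul continuous_id))).intervalIntegrable _ _
    have h1 : (∫ t in (0:ℝ)..P, (∑ k ∈ Finset.range N, u k t)
          * Real.cos (((2*(m:ℤ)+1 : ℤ):ℝ)*θ*t))
        = ∑ k ∈ Finset.range N, ∫ t in (0:ℝ)..P,
            u k t * Real.cos (((2*(m:ℤ)+1 : ℤ):ℝ)*θ*t) := by
      rw [← intervalIntegral.integral_finset_sum (fun k _ => hint k)]
      apply intervalIntegral.integral_congr
      intro t _
      simp only [Finset.sum_mul]
    rw [h1]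
    have h2 : ∀ k : ℕ, (∫ t in (0:ℝ)..P,
        u k t * Real.cos (((2*(m:ℤ)+1 : ℤ):ℝ)*θ*t))
        = if k = m then P/2 * c k else 0 := by
      intro k
      have h3 : (∫ t in (0:ℝ)..P, u k t * Real.cos (((2*(m:ℤ)+1 : ℤ):ℝ)*θ*t))
          = ∫ t in (0:ℝ)..P, (c k * Real.cos (((2*(k:ℤ)+1 : ℤ):ℝ)*θ*t)
              + d k * Real.sin (((2*(k:ℤ)+1 : ℤ):ℝ)*θ*t))
            * ((1:ℝ) * Real.cos (((2*(m:ℤ)+1 : ℤ):ℝ)*θ*t)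
              + (0:ℝ) * Real.sin (((2*(m:ℤ)+1 : ℤ):ℝ)*θ*t)) := by
        apply intervalIntegral.integral_congr
        intro t _
        rw [hudef]
        ring
      rw [h3]
      have h4 := aux_uu θ hθpos (2*(k:ℤ)+1) (2*(m:ℤ)+1) (by omega) (by omega)
        (c k) (d k) 1 0
      rw [← hPdef] at h4
      rw [h4]
      by_cases hkm : k = m
      · subst hkm; rw [if_pos rfl, if_pos rfl]; ring
      · rw [if_neg (by omega : ¬ (2*(k:ℤ)+1 = 2*(m:ℤ)+1)), if_neg hkm]
    calc (∑ k ∈ Finset.range N, ∫ t in (0:ℝ)..P,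
            u k t * Real.cos (((2*(m:ℤ)+1 : ℤ):ℝ)*θ*t))
        = ∑ k ∈ Finset.range N, if k = m then P/2 * c k else 0 :=
          Finset.sum_congr rfl fun k _ => h2 k
      _ = P/2 * c m := by
          rw [Finset.sum_ite_eq' (Finset.range N) m (fun k => P/2 * c k)]
          rw [if_pos (Finset.mem_range.mpr hmN)]
  have hSsin : ∀ (m N : ℕ), m < N →
      (∫ t in (0:ℝ)..P, (∑ k ∈ Finset.range N, u k t)
        * Real.sin (((2*(m:ℤ)+1 : ℤ):ℝ)*θ*t)) = P/2 * d m := by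
    intro m N hmN
    have hint : ∀ k : ℕ, IntervalIntegrable
        (fun t => u k t * Real.sin (((2*(m:ℤ)+1 : ℤ):ℝ)*θ*t)) volume 0 P :=
      fun k => ((hucont k).mul (Real.continuous_sin.comp
        (continuous_const.mul continuous_id))).intervalIntegrable _ _
    have h1 : (∫ t in (0:ℝ)..P, (∑ k ∈ Finset.range N, u k t)
          * Real.sin (((2*(m:ℤ)+1 : ℤ):ℝ)*θ*t))
        = ∑ k ∈ Finset.range N, ∫ t in (0:ℝ)..P,
            u k t * Real.sin (((2*(m:ℤ)+1 : ℤ):ℝ)*θ*t) := by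
      rw [← intervalIntegral.integral_finset_sum (fun k _ => hint k)]
      apply intervalIntegral.integral_congr
      intro t _
      simp only [Finset.sum_mul]
    rw [h1]
    have h2 : ∀ k : ℕ, (∫ t in (0:ℝ)..P,
        u k t * Real.sin (((2*(m:ℤ)+1 : ℤ):ℝ)*θ*t))
        = if k = m then P/2 * d k else 0 := by
      intro k
      have h3 : (∫ t in (0:ℝ)..P, u k t * Real.sin (((2*(m:ℤ)+1 : ℤ):ℝ)*θ*t))
          = ∫ t in (0:ℝ)..P, (c k * Real.cos (((2*(k:ℤ)+1 : ℤ):ℝ)*θ*t)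
              + d k * Real.sin (((2*(k:ℤ)+1 : ℤ):ℝ)*θ*t))
            * ((0:ℝ) * Real.cos (((2*(m:ℤ)+1 : ℤ):ℝ)*θ*t)
              + (1:ℝ) * Real.sin (((2*(m:ℤ)+1 : ℤ):ℝ)*θ*t)) := by
        apply intervalIntegral.integral_congr
        intro t _
        rw [hudef]
        ring
      rw [h3]
      have h4 := aux_uu θ hθpos (2*(k:ℤ)+1) (2*(m:ℤ)+1) (by omega) (by omega)
        (c k) (d k) 0 1
      rw [← hPdef] at h4
      rw [h4]
      by_cases hkm : k = m
      · subst hkm; rw [if_pos rfl, if_pos rfl]; ring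
      · rw [if_neg (by omega : ¬ (2*(k:ℤ)+1 = 2*(m:ℤ)+1)), if_neg hkm]
    calc (∑ k ∈ Finset.range N, ∫ t in (0:ℝ)..P,
            u k t * Real.sin (((2*(m:ℤ)+1 : ℤ):ℝ)*θ*t))
        = ∑ k ∈ Finset.range N, if k = m then P/2 * d k else 0 :=
          Finset.sum_congr rfl fun k _ => h2 k
      _ = P/2 * d m := by
          rw [Finset.sum_ite_eq' (Finset.range N) m (fun k => P/2 * d k)]
          rw [if_pos (Finset.mem_range.mpr hmN)]
  -- summability of squared coefficients
  have hγb : ∀ k : ℕ, |γ (k+1)| ≤ Lp2 - Lp1 := by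
    intro k
    rw [hγ]
    have h := intervalIntegral.norm_integral_le_of_norm_le_const
      (C := 1) (f := fun z => Real.sin (ω (k+1) * z)) (a := Lp1) (b := Lp2)
      (fun x _ => by rw [Real.norm_eq_abs]; exact Real.abs_sin_le_one _)
    rw [Real.norm_eq_abs] at h
    calc |∫ z in Lp1..Lp2, Real.sin (ω (k+1) * z)| ≤ 1 * |Lp2 - Lp1| := h
      _ = Lp2 - Lp1 := by rw [one_mul, abs_of_pos (by linarith)]
  have hcd : Summable (fun k : ℕ => (c k)^2 + (d k)^2) := by
    apply Summable.of_nonneg_of_le (fun k => by positivity)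
      (f := fun k => (Lp2-Lp1)^2 * ((a (k+1))^2 + (b (k+1))^2))
    · intro k
      have h1 := hγb k
      have h2 : (γ (k+1))^2 ≤ (Lp2-Lp1)^2 := by
        nlinarith [abs_nonneg (γ (k+1)), sq_abs (γ (k+1))]
      simp only [hc, hd]
      nlinarith [sq_nonneg (a (k+1)), sq_nonneg (b (k+1))]
    · exact hl2.mul_left _
  set T : ℝ := ∑' k : ℕ, ((c k)^2 + (d k)^2) with hT
  -- L² bound
  have hCbound : ∀ N : ℕ, (∫ t in (0:ℝ)..P,
      (∑ k ∈ Finset.range N, u k t)^2) ≤ P/2 * T := by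
    intro N
    rw [sq_sum_integral P u hucont (fun k => P/2 * ((c k)^2 + (d k)^2)) hUU N,
      ← Finset.mul_sum]
    exact mul_le_mul_of_nonneg_left
      (hcd.sum_le_tsum _ (fun k _ => by positivity)) (by linarith)
  -- the limit machine
  have hkey : ∀ (v : ℝ → ℝ), Continuous v → (∀ t, |v t| ≤ 1) →
      Tendsto (fun N => ∫ t in (0:ℝ)..P,
        (∑ k ∈ Finset.range N, u k t) * v t) atTop (𝓝 0) := by
    intro v hv hv1
    exact key_limit P hPpos u hucont
      (fun t ht => (hsum' t ht.1.le).tendsto_sum_nat)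
      (P/2 * T) hCbound v hv hv1
  -- conclude
  intro k hk
  obtain ⟨m, rfl⟩ : ∃ m, k = m + 1 := ⟨k - 1, by omega⟩
  have hccont : Continuous (fun t => Real.cos (((2*(m:ℤ)+1 : ℤ):ℝ)*θ*t)) :=
    Real.continuous_cos.comp (continuous_const.mul continuous_id)
  have hscont : Continuous (fun t => Real.sin (((2*(m:ℤ)+1 : ℤ):ℝ)*θ*t)) :=
    Real.continuous_sin.comp (continuous_const.mul continuous_id)
  have hcm : P/2 * c m = 0 := by
    have h1 : Tendsto (fun N => ∫ t in (0:ℝ)..P,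
        (∑ k ∈ Finset.range N, u k t)
          * Real.cos (((2*(m:ℤ)+1 : ℤ):ℝ)*θ*t)) atTop (𝓝 (P/2 * c m)) := by
      apply Tendsto.congr' _ tendsto_const_nhds
      filter_upwards [eventually_ge_atTop (m+1)] with N hN
      exact (hScos m N (by omega)).symm
    exact tendsto_nhds_unique h1
      (hkey _ hccont (fun t => Real.abs_cos_le_one _))
  have hdm : P/2 * d m = 0 := by
    have h1 : Tendsto (fun N => ∫ t in (0:ℝ)..P,
        (∑ k ∈ Finset.range N, u k t)
          * Real.sin (((2*(m:ℤ)+1 : ℤ):ℝ)*θ*t)) atTop (𝓝 (P/2 * d m)) := by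
      apply Tendsto.congr' _ tendsto_const_nhds
      filter_upwards [eventually_ge_atTop (m+1)] with N hN
      exact (hSsin m N (by omega)).symm
    exact tendsto_nhds_unique h1
      (hkey _ hscont (fun t => Real.abs_sin_le_one _))
  have hP2ne : P/2 ≠ 0 := ne_of_gt (by linarith)
  have hγm : γ (m+1) ≠ 0 := hγne (m+1) (by omega)
  have hcm0 : c m = 0 := by
    rcases mul_eq_zero.mp hcm with h | h
    · exact absurd h hP2ne
    · exact h
  have hdm0 : d m = 0 := by
    rcases mul_eq_zero.mp hdm with h | h
    · exact absurd h hP2ne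
    · exact h
  rw [hc] at hcm0
  rw [hd] at hdm0
  constructor
  · rcases mul_eq_zero.mp hcm0 with h | h
    · exact h
    · exact absurd h hγm
  · rcases mul_eq_zero.mp hdm0 with h | h
    · exact h
    · exact absurd h hγm
end
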